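/- For every ε > 0 and every continuous function f : I^n → ℝ^{n-1}, there exist a point p ∈ ℝ^{n-1} and a compact connected subset S ⊆ f^{-1}[B(p, ε)] (preimage of the open Euclidean ball of radius ε about p) such that S intersects two opposite faces of I^n for some coordinate direction. -/

import Mathlib

open Finset Filter Topology
namespace CubeAux



open Classical
open Fin.NatCast

/-- vertex `j` of the Freudenthal simplex `(x, π)` -/
def vtx {n : ℕ} (x : Fin n → ℤ) (π : Equiv.Perm (Fin n)) (j : ℕ) : Fin n → ℤ :=
  fun a => x a + if ((π.symm a : ℕ) < j) then 1 else 0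

open Classical in
/-- the finset of indices `i` with `v ∉ U i` -/
noncomputable def miss {n : ℕ} (U : Fin n → Set (Fin n → ℤ)) (v : Fin n → ℤ) : Finset (Fin n) :=
  univ.filter (fun i => v ∉ U i)

open Classical in
/-- label of a vertex: least `i` with `v ∉ U i`, plus one; `0` if none. -/
noncomputable def lab {n : ℕ} (U : Fin n → Set (Fin n → ℤ)) (v : Fin n → ℤ) : ℕ :=
  if h : (miss U v).Nonempty then ((miss U v).min' h : ℕ) + 1 else 0

theorem lab_le {n : ℕ} (U : Fin n → Set (Fin n → ℤ)) (v : Fin n → ℤ) : lab U v ≤ n := by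
  unfold lab
  split
  · rename_i h
    have := ((miss U v).min' h).isLt
    omega
  · omega

theorem lab_eq_zero {n : ℕ} {U : Fin n → Set (Fin n → ℤ)} {v : Fin n → ℤ}
    (h : lab U v = 0) : ∀ i, v ∈ U i := by
  unfold lab at h
  split at h
  · omega
  · rename_i hne
    intro i
    by_contra hvi
    exact hne ⟨i, by simp [miss, hvi]⟩

theorem lab_eq_succ {n : ℕ} {U : Fin n → Set (Fin n → ℤ)} {v : Fin n → ℤ} {i : Fin n}
    (h : lab U v = (i : ℕ) + 1) : v ∉ U i := by
  unfold lab at h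
  split at h
  · rename_i hne
    have hmem : (miss U v).min' hne ∈ miss U v := Finset.min'_mem _ _
    have : ((miss U v).min' hne : ℕ) = (i:ℕ) := by omega
    have heq : (miss U v).min' hne = i := Fin.ext this
    rw [heq] at hmem
    simpa [miss] using hmem
  · omega

theorem lab_of_not_mem {n : ℕ} {U : Fin n → Set (Fin n → ℤ)} {v : Fin n → ℤ} {i : Fin n}
    (h : v ∉ U i) : 1 ≤ lab U v ∧ lab U v ≤ (i : ℕ) + 1 := by
  have hne : (miss U v).Nonempty := ⟨i, by simp [miss, h]⟩
  unfold lab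
  rw [dif_pos hne]
  refine ⟨by omega, ?_⟩
  have h1 : (miss U v).min' hne ≤ i := Finset.min'_le _ _ (by simp [miss, h])
  have := (Fin.le_def.mp h1)
  omega




/-- Abstract parity lemma: the number of `k` such that the labels of vertices other than `k`
form exactly `range d` is odd iff the labels of all `d+1` vertices form `range (d+1)`. -/
theorem count_parity (d : ℕ) (g : ℕ → ℕ) (hg : ∀ j, j ≤ d → g j ≤ d) :
    ((((range (d+1)).filter fun k => ((range (d+1)).erase k).image g = range d).card : ZMod 2))
    = if (range (d+1)).image g = range (d+1) then 1 else 0 := by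
  classical
  set T := (range (d+1)).image g with hT
  have hTsub : T ⊆ range (d+1) := by
    intro y hy
    simp only [hT, mem_image, mem_range] at hy
    obtain ⟨j, hj, rfl⟩ := hy
    exact mem_range.2 (Nat.lt_succ_of_le (hg j (Nat.lt_succ_iff.mp hj)))
  by_cases hfull : T = range (d+1)
  · rw [if_pos hfull]
    have hcard : T.card = (range (d+1)).card := by rw [hfull]
    have hinj : Set.InjOn g (range (d+1)) :=
      Finset.injOn_of_card_image_eq (by rw [← hT, hcard])
    have himg : ∀ k ∈ range (d+1), ((range (d+1)).erase k).image g = T.erase (g k) := by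
      intro k hk
      ext y
      simp only [mem_image, mem_erase, mem_range]
      constructor
      · rintro ⟨j, ⟨hjk, hj⟩, rfl⟩
        exact ⟨fun h => hjk (hinj (mem_range.2 hj) (mem_coe.2 hk) h),
          mem_image.2 ⟨j, mem_range.2 hj, rfl⟩⟩
      · rintro ⟨hyk, hy⟩
        obtain ⟨j, hj, rfl⟩ := mem_image.mp hy
        exact ⟨j, ⟨fun h => hyk (by rw [h]), mem_range.mp hj⟩, rfl⟩
    have herase : ∀ k ∈ range (d+1), (((range (d+1)).erase k).image g = range d ↔ g k = d) := by
      intro k hk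
      rw [himg k hk]
      constructor
      · intro h
        by_contra hne
        have hdT : d ∈ T := by rw [hfull]; exact self_mem_range_succ d
        have : d ∈ T.erase (g k) := mem_erase.2 ⟨fun hh => hne hh.symm, hdT⟩
        rw [h] at this
        exact absurd (mem_range.mp this) (lt_irrefl d)
      · intro h
        rw [h, hfull, range_add_one, erase_insert (by simp)]
    obtain ⟨k₀, hk₀, hgk₀⟩ : ∃ k₀ ∈ range (d+1), g k₀ = d := by
      have : d ∈ T := by rw [hfull]; exact self_mem_range_succ d
      simpa [hT, mem_image] using this
    have : (range (d+1)).filter (fun k => ((range (d+1)).erase k).image g = range d) = {k₀} := by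
      ext k
      simp only [mem_filter, mem_singleton]
      constructor
      · rintro ⟨hk, h⟩
        have := (herase k hk).mp h
        exact hinj (mem_coe.2 hk) (mem_coe.2 hk₀) (by rw [this, hgk₀])
      · rintro rfl
        exact ⟨hk₀, (herase _ hk₀).mpr hgk₀⟩
    rw [this, card_singleton]
    norm_num
  · rw [if_neg hfull]
    by_cases hmiss : range d ⊆ T
    · -- T = range d exactly; there is a unique duplicated pair
      have hd : d ∉ T := by
        intro hdT
        apply hfull
        apply Finset.Subset.antisymm hTsub
        rw [range_add_one]
        exact insert_subset hdT hmiss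
      have hTeq : T = range d := by
        apply Finset.Subset.antisymm _ hmiss
        intro y hy
        have := hTsub hy
        rw [mem_range] at this ⊢
        rcases Nat.lt_succ_iff_lt_or_eq.mp this with h | h
        · exact h
        · exact absurd (h ▸ hy) hd
      have hTcard : T.card = d := by rw [hTeq, card_range]
      obtain ⟨j₁, hj₁, j₂, hj₂, hj12, hgj⟩ :
          ∃ x ∈ range (d+1), ∃ y ∈ range (d+1), x ≠ y ∧ g x = g y := by
        apply Finset.exists_ne_map_eq_of_card_lt_of_maps_to
        · rw [hTcard, card_range]; omega
        · intro a ha; exact mem_image_of_mem g ha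
      -- injectivity away from j₁
      have himgerase : ((range (d+1)).erase j₁).image g = T := by
        apply Finset.Subset.antisymm
        · exact image_subset_image (erase_subset _ _)
        · intro y hy
          obtain ⟨j, hj, rfl⟩ := mem_image.mp hy
          by_cases hjj : j = j₁
          · subst hjj
            exact mem_image.2 ⟨j₂, mem_erase.2 ⟨fun h => hj12 h.symm, hj₂⟩, hgj.symm⟩
          · exact mem_image.2 ⟨j, mem_erase.2 ⟨hjj, hj⟩, rfl⟩
      have hinj' : Set.InjOn g ((range (d+1)).erase j₁) := by
        apply Finset.injOn_of_card_image_eq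
        rw [himgerase, hTcard, card_erase_of_mem hj₁, card_range]
        omega
      -- the filter set equals {j₁, j₂}
      have hdup : ∀ k ∈ range (d+1),
          (((range (d+1)).erase k).image g = range d ↔ ∃ j ∈ range (d+1), j ≠ k ∧ g j = g k) := by
        intro k hk
        constructor
        · intro h
          have hgk : g k ∈ range d := by
            rw [← hTeq]; exact mem_image_of_mem g hk
          rw [← h] at hgk
          obtain ⟨j, hj, hjeq⟩ := mem_image.mp hgk
          exact ⟨j, (erase_subset _ _) hj, (mem_erase.mp hj).1, hjeq⟩
        · rintro ⟨j₀, hj₀, hj₀k, hgj₀⟩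
          apply Finset.Subset.antisymm
          · intro y hy
            rw [← hTeq]
            exact (image_subset_image (erase_subset _ _)) hy
          · intro y hy
            rw [← hTeq, hT] at hy
            obtain ⟨j, hj, rfl⟩ := mem_image.mp hy
            by_cases hjk : j = k
            · subst hjk
              exact mem_image.2 ⟨j₀, mem_erase.2 ⟨hj₀k, hj₀⟩, hgj₀⟩
            · exact mem_image.2 ⟨j, mem_erase.2 ⟨hjk, hj⟩, rfl⟩
      have hfil : (range (d+1)).filter (fun k => ((range (d+1)).erase k).image g = range d)
          = {j₁, j₂} := by
        ext k
        simp only [mem_filter, mem_insert, mem_singleton]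
        constructor
        · rintro ⟨hk, h⟩
          obtain ⟨j, hj, hjk, hgjk⟩ := (hdup k hk).mp h
          by_contra hcon
          push_neg at hcon
          have hkj₁ : k ≠ j₁ := hcon.1
          by_cases hjj₁ : j = j₁
          · subst hjj₁
            -- g j₂ = g j₁ = g k, j₂ ≠ k, both in erase j₁ (note j₁ has been renamed to j)
            have h1 : j₂ ∈ (range (d+1)).erase j := mem_erase.2 ⟨fun h => hj12 h.symm, hj₂⟩
            have h2 : k ∈ (range (d+1)).erase j := mem_erase.2 ⟨hkj₁, hk⟩
            have : j₂ = k := hinj' (mem_coe.2 h1) (mem_coe.2 h2) (by rw [← hgj, hgjk])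
            exact hcon.2 this.symm
          · have h1 : j ∈ (range (d+1)).erase j₁ := mem_erase.2 ⟨hjj₁, hj⟩
            have h2 : k ∈ (range (d+1)).erase j₁ := mem_erase.2 ⟨hkj₁, hk⟩
            exact hjk (hinj' (mem_coe.2 h1) (mem_coe.2 h2) hgjk)
        · rintro (h | h)
          · exact h ▸ ⟨hj₁, (hdup j₁ hj₁).mpr ⟨j₂, hj₂, fun hh => hj12 hh.symm, hgj.symm⟩⟩
          · exact h ▸ ⟨hj₂, (hdup j₂ hj₂).mpr ⟨j₁, hj₁, hj12, hgj⟩⟩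
      rw [hfil, card_pair hj12]
      norm_num
      decide
    · -- some value of `range d` is never attained: no doors at all
      have : (range (d+1)).filter (fun k => ((range (d+1)).erase k).image g = range d) = ∅ := by
        rw [filter_eq_empty_iff]
        intro k _ h
        apply hmiss
        rw [← h]
        exact image_subset_image (erase_subset _ _)
      rw [this, card_empty]
      norm_num




/-- the set of vertices of the facet of the simplex `(x, π)` obtained by dropping vertex `k` -/
def fVerts {n : ℕ} (x : Fin n → ℤ) (π : Equiv.Perm (Fin n)) (k : ℕ) : Finset (Fin n → ℤ) :=
  ((range (n+1)).erase k).image (vtx x π)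

theorem rot_symm_zero {n : ℕ} : (finRotate (n+1)).symm 0 = Fin.last n := by
  rw [Equiv.symm_apply_eq, finRotate_succ_apply, Fin.last_add_one]

theorem rot_symm_val {n : ℕ} {t : Fin (n+1)} (ht : t ≠ 0) :
    (((finRotate (n+1)).symm t : Fin (n+1)) : ℕ) = (t : ℕ) - 1 := by
  set u := (finRotate (n+1)).symm t with hu
  have h1 : u + 1 = t := by
    rw [← finRotate_succ_apply, hu, Equiv.apply_symm_apply]
  by_cases hl : u = Fin.last n
  · exfalso
    apply ht
    rw [← h1, hl, Fin.last_add_one]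
  · have hlt : u < Fin.last n := lt_of_le_of_ne (Fin.le_last u) hl
    have := Fin.val_add_one_of_lt hlt
    rw [h1] at this
    omega

theorem rot_val {n : ℕ} {t : Fin (n+1)} (ht : t ≠ Fin.last n) :
    ((finRotate (n+1) t : Fin (n+1)) : ℕ) = (t : ℕ) + 1 := by
  rw [finRotate_succ_apply]
  exact Fin.val_add_one_of_lt (lt_of_le_of_ne (Fin.le_last t) ht)

theorem vtx_rot {n : ℕ} (x : Fin (n+1) → ℤ) (π : Equiv.Perm (Fin (n+1))) {j : ℕ} (hj : j ≤ n) :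
    vtx (fun a => x a + if a = π 0 then 1 else 0) ((finRotate (n+1)).trans π) j
      = vtx x π (j+1) := by
  funext a
  simp only [vtx, Equiv.symm_trans_apply]
  by_cases h0 : π.symm a = 0
  · have ha : a = π 0 := by rw [← h0, Equiv.apply_symm_apply]
    rw [if_pos ha]
    simp only [h0, rot_symm_zero]
    have hv : (Fin.last n : ℕ) = n := Fin.val_last n
    have hz : ((0 : Fin (n+1)) : ℕ) = 0 := rfl
    split_ifs <;> omega
  · have ha : a ≠ π 0 := fun hc => h0 (by rw [hc, Equiv.symm_apply_apply])
    rw [if_neg ha]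
    have h1 : (((finRotate (n+1)).symm (π.symm a)) : ℕ) = ((π.symm a : Fin (n+1)) : ℕ) - 1 :=
      rot_symm_val h0
    have h2 : 1 ≤ ((π.symm a : Fin (n+1)) : ℕ) :=
      Nat.pos_of_ne_zero (fun hc => h0 (Fin.ext hc))
    split_ifs <;> omega

theorem vtx_rotsymm {n : ℕ} (x : Fin (n+1) → ℤ) (π : Equiv.Perm (Fin (n+1))) {j : ℕ} (hj : j ≤ n) :
    vtx (fun a => x a - if a = π (Fin.last n) then 1 else 0) ((finRotate (n+1)).symm.trans π) (j+1)
      = vtx x π j := by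
  funext a
  simp only [vtx, Equiv.symm_trans_apply, Equiv.symm_symm]
  by_cases h0 : π.symm a = Fin.last n
  · have ha : a = π (Fin.last n) := by rw [← h0, Equiv.apply_symm_apply]
    have h1 : finRotate (n+1) (Fin.last n) = 0 := by
      rw [finRotate_succ_apply, Fin.last_add_one]
    rw [if_pos ha]
    simp only [h0, h1]
    have hv : (Fin.last n : ℕ) = n := Fin.val_last n
    have hz : ((0 : Fin (n+1)) : ℕ) = 0 := rfl
    split_ifs <;> omega
  · have ha : a ≠ π (Fin.last n) := fun hc => h0 (by rw [hc, Equiv.symm_apply_apply])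
    rw [if_neg ha]
    have h1 : ((finRotate (n+1) (π.symm a)) : ℕ) = ((π.symm a : Fin (n+1)) : ℕ) + 1 := rot_val h0
    split_ifs <;> omega

theorem vtx_swap {n : ℕ} (x : Fin (n+1) → ℤ) (π : Equiv.Perm (Fin (n+1))) {k j : ℕ}
    (h1 : 1 ≤ k) (h2 : k ≤ n) (hjk : j ≠ k) :
    vtx x ((Equiv.swap (((k-1 : ℕ) : Fin (n+1))) ((k : ℕ) : Fin (n+1))).trans π) j
      = vtx x π j := by
  have hpv : ((((k-1 : ℕ)) : Fin (n+1)) : ℕ) = k - 1 := Fin.val_cast_of_lt (by omega)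
  have hqv : (((k : ℕ) : Fin (n+1)) : ℕ) = k := Fin.val_cast_of_lt (by omega)
  funext a
  simp only [vtx, Equiv.symm_trans_apply, Equiv.symm_swap]
  by_cases htp : π.symm a = ((k-1 : ℕ) : Fin (n+1))
  · simp only [htp, Equiv.swap_apply_left]
    split_ifs <;> omega
  · by_cases htq : π.symm a = ((k : ℕ) : Fin (n+1))
    · simp only [htq, Equiv.swap_apply_right]
      split_ifs <;> omega
    · simp only [Equiv.swap_apply_of_ne_of_ne htp htq]



/-- the grid simplices -/
noncomputable def Sx (n N : ℕ) : Finset ((Fin n → ℤ) × Equiv.Perm (Fin n)) :=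
  (Fintype.piFinset fun _ => Finset.Icc (0:ℤ) ((N:ℤ)-1)) ×ˢ univ

theorem vtx_grid {n N : ℕ} {x : Fin n → ℤ} (π : Equiv.Perm (Fin n))
    (hx : ∀ a, x a ∈ Finset.Icc (0:ℤ) ((N:ℤ)-1)) (j : ℕ) :
    ∀ a, 0 ≤ vtx x π j a ∧ vtx x π j a ≤ (N:ℤ) := by
  intro a
  have := hx a
  rw [Finset.mem_Icc] at this
  unfold vtx
  split_ifs <;> omega

theorem erase_zero_range (m : ℕ) : (range (m+1)).erase 0 = (range m).image (· + 1) := by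
  ext j
  simp only [mem_erase, mem_range, mem_image]
  constructor
  · rintro ⟨h0, hm⟩
    exact ⟨j - 1, by omega, by omega⟩
  · rintro ⟨i, hi, rfl⟩
    omega

theorem erase_top_range (m : ℕ) : (range (m+1)).erase m = range m := by
  rw [range_add_one, erase_insert (by simp)]


theorem fVerts_swap {n : ℕ} (x : Fin (n+1) → ℤ) (π : Equiv.Perm (Fin (n+1))) {k : ℕ}
    (h1 : 1 ≤ k) (h2 : k ≤ n) :
    fVerts x ((Equiv.swap (((k-1 : ℕ) : Fin (n+1))) ((k : ℕ) : Fin (n+1))).trans π) k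
      = fVerts x π k := by
  unfold fVerts
  apply Finset.image_congr
  intro j hj
  exact vtx_swap x π h1 h2 (Finset.mem_erase.mp hj).1

theorem fVerts_pivot0 {n : ℕ} (x : Fin (n+1) → ℤ) (π : Equiv.Perm (Fin (n+1))) :
    fVerts (fun a => x a + if a = π 0 then 1 else 0) ((finRotate (n+1)).trans π) (n+1)
      = fVerts x π 0 := by
  unfold fVerts
  rw [erase_top_range (n+1), erase_zero_range (n+1), image_image]
  apply Finset.image_congr
  intro j hj
  have hjn : j ≤ n := Nat.lt_succ_iff.mp (mem_range.mp hj)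
  exact vtx_rot x π hjn

theorem fVerts_pivotN {n : ℕ} (x : Fin (n+1) → ℤ) (π : Equiv.Perm (Fin (n+1))) :
    fVerts (fun a => x a - if a = π (Fin.last n) then 1 else 0)
      ((finRotate (n+1)).symm.trans π) 0 = fVerts x π (n+1) := by
  unfold fVerts
  rw [erase_zero_range (n+1), erase_top_range (n+1), image_image]
  apply Finset.image_congr
  intro j hj
  have hjn : j ≤ n := Nat.lt_succ_iff.mp (mem_range.mp hj)
  exact vtx_rotsymm x π hjn

/-- the pivot (reflection across a facet) operation on pairs (simplex, dropped vertex) -/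
def pivot {n : ℕ} (p : ((Fin (n+1) → ℤ) × Equiv.Perm (Fin (n+1))) × ℕ) :
    ((Fin (n+1) → ℤ) × Equiv.Perm (Fin (n+1))) × ℕ :=
  if p.2 = 0 then
    ((fun a => p.1.1 a + if a = p.1.2 0 then 1 else 0, (finRotate (n+1)).trans p.1.2), n+1)
  else if p.2 = n+1 then
    ((fun a => p.1.1 a - if a = p.1.2 (Fin.last n) then 1 else 0,
      (finRotate (n+1)).symm.trans p.1.2), 0)
  else ((p.1.1, (Equiv.swap (((p.2-1 : ℕ) : Fin (n+1))) ((p.2 : ℕ) : Fin (n+1))).trans p.1.2), p.2)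

open Classical in
noncomputable def fLab {n : ℕ} (U : Fin n → Set (Fin n → ℤ)) (x : Fin n → ℤ)
    (π : Equiv.Perm (Fin n)) (k : ℕ) : Finset ℕ :=
  (fVerts x π k).image (lab U)

open Classical in
noncomputable def FLset (n N : ℕ) (U : Fin n → Set (Fin n → ℤ)) :
    Finset ((Fin n → ℤ) × Equiv.Perm (Fin n)) :=
  (Sx n N).filter fun s => ((range (n+1)).image fun j => lab U (vtx s.1 s.2 j)) = range (n+1)

open Classical in
noncomputable def Doors (n N : ℕ) (U : Fin n → Set (Fin n → ℤ)) :
    Finset (((Fin n → ℤ) × Equiv.Perm (Fin n)) × ℕ) :=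
  ((Sx n N) ×ˢ range (n+1)).filter fun p => fLab U p.1.1 p.1.2 p.2 = range n

theorem fLab_eq_image {n : ℕ} (U : Fin n → Set (Fin n → ℤ)) (x : Fin n → ℤ)
    (π : Equiv.Perm (Fin n)) (k : ℕ) :
    fLab U x π k = ((range (n+1)).erase k).image (fun j => lab U (vtx x π j)) := by
  unfold fLab fVerts
  rw [image_image]
  rfl

/-- a door facet dropping vertex `0` never lies on the top boundary -/
theorem piv0_valid {n N : ℕ} {U : Fin (n+1) → Set (Fin (n+1) → ℤ)}
    {x : Fin (n+1) → ℤ} {π : Equiv.Perm (Fin (n+1))}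
    (h1 : ∀ v : Fin (n+1) → ℤ, (∀ a, 0 ≤ v a ∧ v a ≤ (N:ℤ)) → ∀ i, v i = (N:ℤ) → v ∉ U i)
    (hx : ∀ a, x a ∈ Finset.Icc (0:ℤ) ((N:ℤ)-1))
    (hdoor : fLab U x π 0 = range (n+1)) :
    x (π 0) + 1 ≤ (N:ℤ) - 1 := by
  have hble := hx (π 0)
  rw [Finset.mem_Icc] at hble
  rcases lt_or_eq_of_le hble.2 with h | h
  · omega
  · exfalso
    have h0mem : 0 ∈ fLab U x π 0 := by
      rw [hdoor]; exact mem_range.2 (Nat.succ_pos n)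
    rw [fLab_eq_image] at h0mem
    obtain ⟨j, hj, hlab⟩ := mem_image.mp h0mem
    have hj0 : j ≠ 0 := (mem_erase.mp hj).1
    have hval : vtx x π j (π 0) = (N:ℤ) := by
      unfold vtx
      rw [Equiv.symm_apply_apply]
      have : ((0 : Fin (n+1)) : ℕ) < j := by
        have : ((0 : Fin (n+1)) : ℕ) = 0 := rfl
        omega
      rw [if_pos this, h]
      ring
    exact h1 _ (vtx_grid π hx j) _ hval (lab_eq_zero hlab (π 0))

/-- a boundary door (dropping the top vertex, lying in the bottom face) has `π` fixing the
last coordinate -/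
theorem bdry_pi_last {n N : ℕ} {U : Fin (n+1) → Set (Fin (n+1) → ℤ)}
    {x : Fin (n+1) → ℤ} {π : Equiv.Perm (Fin (n+1))}
    (h0 : ∀ v : Fin (n+1) → ℤ, (∀ a, 0 ≤ v a ∧ v a ≤ (N:ℤ)) → ∀ i, v i = 0 → v ∈ U i)
    (hx : ∀ a, x a ∈ Finset.Icc (0:ℤ) ((N:ℤ)-1))
    (hdoor : fLab U x π (n+1) = range (n+1))
    (hlast : x (π (Fin.last n)) = 0) :
    π (Fin.last n) = Fin.last n := by
  set c := π (Fin.last n) with hc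
  have hvtx : ∀ j ∈ (range (n+2)).erase (n+1), vtx x π j c = 0 := by
    intro j hj
    have hjmem := mem_erase.mp hj
    have hjn : j ≤ n := by
      have := mem_range.mp hjmem.2
      have := hjmem.1
      omega
    unfold vtx
    rw [hc, Equiv.symm_apply_apply]
    have : ¬ ((Fin.last n : ℕ) < j) := by
      rw [Fin.val_last]; omega
    rw [if_neg this, hlast]
    ring
  have hnotlab : ((c : ℕ) + 1) ∉ fLab U x π (n+1) := by
    rw [fLab_eq_image]
    intro hmem
    obtain ⟨j, hj, hlab⟩ := mem_image.mp hmem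
    have hUc : vtx x π j ∈ U c := h0 _ (vtx_grid π hx j) c (hvtx j hj)
    exact lab_eq_succ hlab hUc
  rw [hdoor] at hnotlab
  have : (c : ℕ) ≥ n := by
    by_contra hlt
    exact hnotlab (mem_range.2 (by omega))
  have : (c : ℕ) = n := le_antisymm (Nat.lt_succ_iff.mp c.isLt) this
  exact Fin.ext (by rw [this, Fin.val_last])

/-- extend a permutation of `Fin n` to `Fin (n+1)` fixing the last element -/
def liftPerm {n : ℕ} (σ : Equiv.Perm (Fin n)) : Equiv.Perm (Fin (n+1)) where
  toFun := Fin.lastCases (Fin.last n) (fun i => (σ i).castSucc)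
  invFun := Fin.lastCases (Fin.last n) (fun i => (σ.symm i).castSucc)
  left_inv := by
    intro a
    cases a using Fin.lastCases with
    | last => simp
    | cast i => simp
  right_inv := by
    intro a
    cases a using Fin.lastCases with
    | last => simp
    | cast i => simp

@[simp] theorem liftPerm_last {n : ℕ} (σ : Equiv.Perm (Fin n)) :
    liftPerm σ (Fin.last n) = Fin.last n := by simp [liftPerm]

@[simp] theorem liftPerm_castSucc {n : ℕ} (σ : Equiv.Perm (Fin n)) (i : Fin n) :
    liftPerm σ (Fin.castSucc i) = (σ i).castSucc := by simp [liftPerm]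

@[simp] theorem liftPerm_symm_last {n : ℕ} (σ : Equiv.Perm (Fin n)) :
    (liftPerm σ).symm (Fin.last n) = Fin.last n := by simp [liftPerm]

@[simp] theorem liftPerm_symm_castSucc {n : ℕ} (σ : Equiv.Perm (Fin n)) (i : Fin n) :
    (liftPerm σ).symm (Fin.castSucc i) = (σ.symm i).castSucc := by simp [liftPerm]

theorem vtx_snoc {n : ℕ} (y : Fin n → ℤ) (σ : Equiv.Perm (Fin n)) {j : ℕ} (hj : j ≤ n) :
    vtx (Fin.snoc y 0) (liftPerm σ) j = Fin.snoc (vtx y σ j) 0 := by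
  funext a
  cases a using Fin.lastCases with
  | last =>
    unfold vtx
    simp only [Fin.snoc_last, liftPerm_symm_last]
    rw [if_neg (by rw [Fin.val_last]; omega)]
    ring
  | cast i =>
    unfold vtx
    simp only [Fin.snoc_castSucc, liftPerm_symm_castSucc, Fin.coe_castSucc]

theorem snoc_grid {n N : ℕ} {w : Fin n → ℤ} (hw : ∀ a, 0 ≤ w a ∧ w a ≤ (N:ℤ)) :
    ∀ a : Fin (n+1), 0 ≤ (Fin.snoc w (0:ℤ) : Fin (n+1) → ℤ) a ∧ (Fin.snoc w (0:ℤ) : Fin (n+1) → ℤ) a ≤ (N:ℤ) := by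
  intro a
  cases a using Fin.lastCases with
  | last =>
    simp only [Fin.snoc_last]
    exact ⟨le_refl _, Int.natCast_nonneg N⟩
  | cast i =>
    simp only [Fin.snoc_castSucc]
    exact hw i

/-- the induced lower-dimensional system of sets -/
def lowerU {n : ℕ} (U : Fin (n+1) → Set (Fin (n+1) → ℤ)) : Fin n → Set (Fin n → ℤ) :=
  fun i => {w : Fin n → ℤ | Fin.snoc w 0 ∈ U i.castSucc}

theorem lab_snoc {n N : ℕ} (U : Fin (n+1) → Set (Fin (n+1) → ℤ))
    (h0 : ∀ v : Fin (n+1) → ℤ, (∀ a, 0 ≤ v a ∧ v a ≤ (N:ℤ)) → ∀ i, v i = 0 → v ∈ U i)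
    (w : Fin n → ℤ) (hw : ∀ a, 0 ≤ w a ∧ w a ≤ (N:ℤ)) :
    lab U (Fin.snoc w 0) = lab (lowerU U) w := by
  classical
  set U' : Fin n → Set (Fin n → ℤ) := lowerU U with hU'
  have hUlast : Fin.snoc w 0 ∈ U (Fin.last n) :=
    h0 _ (snoc_grid hw) (Fin.last n) (Fin.snoc_last _ _)
  have hmiss : miss U (Fin.snoc w 0) = (miss U' w).image Fin.castSucc := by
    ext i
    cases i using Fin.lastCases with
    | last =>
      simp only [miss, mem_filter, mem_univ, true_and, mem_image]
      constructor
      · intro h; exact absurd hUlast h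
      · rintro ⟨i', _, hc⟩
        exact absurd hc (Fin.castSucc_lt_last i').ne
    | cast i =>
      simp only [miss, mem_filter, mem_univ, true_and, mem_image]
      constructor
      · intro h
        exact ⟨i, by simpa [hU', lowerU] using h, rfl⟩
      · rintro ⟨i', hi', hc⟩
        have : i' = i := Fin.castSucc_injective n hc
        subst this
        simpa [hU', lowerU] using hi'
  unfold lab
  by_cases hne : (miss U' w).Nonempty
  · have hne2 : (miss U (Fin.snoc w 0)).Nonempty := by
      rw [hmiss]; exact hne.image _
    rw [dif_pos hne2, dif_pos hne]
    congr 1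
    -- equality of min' values
    have h1 : ((miss U (Fin.snoc w 0)).min' hne2 : ℕ)
        ≤ (((miss U' w).min' hne).castSucc : Fin (n+1)) := by
      apply Fin.le_def.mp
      apply Finset.min'_le
      rw [hmiss]
      exact mem_image_of_mem _ (Finset.min'_mem _ _)
    have h2 : ((miss U (Fin.snoc w 0)).min' hne2) ∈ (miss U' w).image Fin.castSucc := by
      rw [← hmiss]
      exact Finset.min'_mem _ _
    obtain ⟨i₀, hi₀, hc⟩ := mem_image.mp h2
    have h3 : ((miss U' w).min' hne) ≤ i₀ := Finset.min'_le _ _ hi₀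
    have e1 : (((miss U (Fin.snoc w 0)).min' hne2 : Fin (n+1)) : ℕ) = (i₀ : ℕ) := by
      rw [← hc]
      simp
    have e2 : (((miss U' w).min' hne : Fin n) : ℕ) ≤ (i₀ : ℕ) := Fin.le_def.mp h3
    have e3 : (((miss U (Fin.snoc w 0)).min' hne2 : Fin (n+1)) : ℕ)
        ≤ (((miss U' w).min' hne : Fin n) : ℕ) := by
      have h1' := h1
      rw [Fin.coe_castSucc] at h1'
      exact h1'
    omega
  · have hne2 : ¬ (miss U (Fin.snoc w 0)).Nonempty := by
      rw [hmiss, Finset.image_nonempty]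
      exact hne
    rw [dif_neg hne2, dif_neg hne]

theorem mem_Sx_iff {n N : ℕ} {s : (Fin n → ℤ) × Equiv.Perm (Fin n)} :
    s ∈ Sx n N ↔ ∀ a, s.1 a ∈ Finset.Icc (0:ℤ) ((N:ℤ)-1) := by
  rw [Sx, Finset.mem_product]
  simp [Fintype.mem_piFinset]

theorem mem_Doors_iff {n N : ℕ} {U : Fin n → Set (Fin n → ℤ)}
    {p : ((Fin n → ℤ) × Equiv.Perm (Fin n)) × ℕ} :
    p ∈ Doors n N U ↔ (p.1 ∈ Sx n N ∧ p.2 ∈ range (n+1)) ∧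
      fLab U p.1.1 p.1.2 p.2 = range n := by
  rw [Doors, Finset.mem_filter, Finset.mem_product]

theorem rot_trans_last {n : ℕ} (π : Equiv.Perm (Fin (n+1))) :
    ((finRotate (n+1)).trans π) (Fin.last n) = π 0 := by
  rw [Equiv.trans_apply, finRotate_succ_apply, Fin.last_add_one]

theorem rotsymm_trans_zero {n : ℕ} (π : Equiv.Perm (Fin (n+1))) :
    ((finRotate (n+1)).symm.trans π) 0 = π (Fin.last n) := by
  rw [Equiv.trans_apply, rot_symm_zero]

theorem pivot_k0 {n : ℕ} (x : Fin (n+1) → ℤ) (π : Equiv.Perm (Fin (n+1))) :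
    pivot ((x, π), 0)
      = ((fun a => x a + if a = π 0 then 1 else 0, (finRotate (n+1)).trans π), n+1) := by
  simp [pivot]

theorem pivot_ktop {n : ℕ} (x : Fin (n+1) → ℤ) (π : Equiv.Perm (Fin (n+1))) :
    pivot ((x, π), n+1)
      = ((fun a => x a - if a = π (Fin.last n) then 1 else 0,
          (finRotate (n+1)).symm.trans π), 0) := by
  simp [pivot]

theorem pivot_mid {n : ℕ} (x : Fin (n+1) → ℤ) (π : Equiv.Perm (Fin (n+1))) {k : ℕ}
    (hk0 : k ≠ 0) (hktop : k ≠ n+1) :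
    pivot ((x, π), k)
      = ((x, (Equiv.swap (((k-1 : ℕ) : Fin (n+1))) ((k : ℕ) : Fin (n+1))).trans π), k) := by
  simp [pivot, hk0, hktop]

theorem FL_odd : ∀ (n N : ℕ), 1 ≤ N → ∀ (U : Fin n → Set (Fin n → ℤ)),
    (∀ v : Fin n → ℤ, (∀ a, 0 ≤ v a ∧ v a ≤ (N:ℤ)) → ∀ i, v i = 0 → v ∈ U i) →
    (∀ v : Fin n → ℤ, (∀ a, 0 ≤ v a ∧ v a ≤ (N:ℤ)) → ∀ i, v i = (N:ℤ) → v ∉ U i) →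
    ((FLset n N U).card : ZMod 2) = 1 := by
  intro n
  induction n with
  | zero =>
    intro N hN U h0 h1
    have hfl : FLset 0 N U = Sx 0 N := by
      apply Finset.filter_true_of_mem
      intro s _
      have hlab : lab U (vtx s.1 s.2 0) = 0 := by
        unfold lab
        rw [dif_neg]
        rintro ⟨i, -⟩
        exact i.elim0
      rw [Finset.range_one, Finset.image_singleton, hlab]
    rw [hfl]
    have hcard : (Sx 0 N).card = 1 := by
      rw [Sx, Finset.card_product]
      rw [Fintype.card_piFinset]
      simp
    rw [hcard]
    simp
  | succ n ih =>
    intro N hN U h0 h1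
    classical
    have hN1 : (1:ℤ) ≤ (N:ℤ) := by exact_mod_cast hN
    -- lower-dimensional hypotheses
    have h0' : ∀ v : Fin n → ℤ, (∀ a, 0 ≤ v a ∧ v a ≤ (N:ℤ)) → ∀ i, v i = 0 → v ∈ lowerU U i := by
      intro v hv i hvi
      show Fin.snoc v 0 ∈ U i.castSucc
      apply h0 _ (snoc_grid hv) i.castSucc
      simp only [Fin.snoc_castSucc]
      exact hvi
    have h1' : ∀ v : Fin n → ℤ, (∀ a, 0 ≤ v a ∧ v a ≤ (N:ℤ)) → ∀ i, v i = (N:ℤ) →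
        v ∉ lowerU U i := by
      intro v hv i hvi hmem
      have : Fin.snoc v 0 ∈ U i.castSucc := hmem
      apply h1 _ (snoc_grid hv) i.castSucc _ this
      simp only [Fin.snoc_castSucc]
      exact hvi
    have ihres := ih N hN (lowerU U) h0' h1'
    -- Step A : door count has the same parity as the fully-labeled count
    have hDsum : (Doors (n+1) N U).card
        = ∑ s ∈ Sx (n+1) N,
            ((range (n+2)).filter fun k => fLab U s.1 s.2 k = range (n+1)).card := by
      rw [Finset.card_eq_sum_card_fiberwise
        (fun p hp => ((mem_Doors_iff.mp hp).1).1 : ∀ p ∈ Doors (n+1) N U, p.1 ∈ Sx (n+1) N)]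
      apply Finset.sum_congr rfl
      intro s hs
      apply Finset.card_bij (fun p _ => p.2)
      · intro p hp
        rw [Finset.mem_filter] at hp
        obtain ⟨hpD, hps⟩ := hp
        rw [mem_Doors_iff] at hpD
        rw [Finset.mem_filter]
        refine ⟨hpD.1.2, ?_⟩
        rw [← hps]
        exact hpD.2
      · intro p hp q hq hpq
        rw [Finset.mem_filter] at hp hq
        have h1p := hp.2
        have h1q := hq.2
        calc p = (p.1, p.2) := rfl
        _ = (q.1, q.2) := by rw [h1p, h1q, hpq]
        _ = q := rfl
      · intro k hk
        rw [Finset.mem_filter] at hk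
        refine ⟨(s, k), ?_, rfl⟩
        rw [Finset.mem_filter, mem_Doors_iff]
        exact ⟨⟨⟨hs, hk.1⟩, hk.2⟩, rfl⟩
    have hAcast : (((Doors (n+1) N U).card : ℕ) : ZMod 2)
        = ((FLset (n+1) N U).card : ZMod 2) := by
      rw [hDsum, Nat.cast_sum]
      have hterm : ∀ s ∈ Sx (n+1) N,
          ((((range (n+2)).filter fun k => fLab U s.1 s.2 k = range (n+1)).card : ℕ) : ZMod 2)
          = if ((range (n+2)).image fun j => lab U (vtx s.1 s.2 j)) = range (n+2)
            then (1 : ZMod 2) else 0 := by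
        intro s _
        have hfil : ((range (n+2)).filter fun k => fLab U s.1 s.2 k = range (n+1))
            = ((range (n+2)).filter fun k =>
                ((range (n+2)).erase k).image (fun j => lab U (vtx s.1 s.2 j)) = range (n+1)) := by
          apply Finset.filter_congr
          intro k _
          rw [fLab_eq_image]
        rw [hfil]
        exact count_parity (n+1) (fun j => lab U (vtx s.1 s.2 j)) (fun j _ => lab_le U _)
      rw [Finset.sum_congr rfl hterm, Finset.sum_boole]
      rfl
    -- Step B : boundary doors
    set Bd := (Doors (n+1) N U).filter
      (fun p => p.2 = n+1 ∧ p.1.1 (p.1.2 (Fin.last n)) = 0) with hBd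
    have hBsub : Bd ⊆ Doors (n+1) N U := Finset.filter_subset _ _
    -- Step C : the pivot involution kills the parity of interior doors
    have hmemE : ∀ p, p ∈ (Doors (n+1) N U) \ Bd ↔ p ∈ Doors (n+1) N U ∧
        ¬(p.2 = n+1 ∧ p.1.1 (p.1.2 (Fin.last n)) = 0) := by
      intro p
      rw [Finset.mem_sdiff, hBd, Finset.mem_filter]
      tauto
    have key : ∀ p ∈ (Doors (n+1) N U) \ Bd,
        pivot p ∈ (Doors (n+1) N U) \ Bd ∧ pivot (pivot p) = p ∧ pivot p ≠ p := by
      rintro ⟨⟨x, π⟩, k⟩ hp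
      rw [hmemE] at hp
      obtain ⟨hpD, hpnb⟩ := hp
      rw [mem_Doors_iff] at hpD
      obtain ⟨⟨hpSx, hpk⟩, hpdoor⟩ := hpD
      simp only at hpSx hpk hpdoor hpnb
      have hx : ∀ a, x a ∈ Finset.Icc (0:ℤ) ((N:ℤ)-1) := mem_Sx_iff.mp hpSx
      have hxlo : ∀ a, 0 ≤ x a := fun a => (Finset.mem_Icc.mp (hx a)).1
      have hxhi : ∀ a, x a ≤ (N:ℤ)-1 := fun a => (Finset.mem_Icc.mp (hx a)).2
      rcases Nat.eq_zero_or_pos k with hk0 | hkpos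
      · -- pivot at the bottom vertex
        subst hk0
        have hpiv := pivot_k0 x π
        have hxval : x (π 0) + 1 ≤ (N:ℤ) - 1 := piv0_valid (N := N) h1 hx hpdoor
        have hSx' : ((fun a => x a + if a = π 0 then 1 else 0 : Fin (n+1) → ℤ),
            (finRotate (n+1)).trans π) ∈ Sx (n+1) N := by
          rw [mem_Sx_iff]
          intro a
          simp only
          rw [Finset.mem_Icc]
          by_cases ha : a = π 0
          · rw [if_pos ha]
            have h1a := hxlo a
            have h2a : x a + 1 ≤ (N:ℤ) - 1 := by rw [ha]; exact hxval
            constructor <;> omega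
          · rw [if_neg ha]
            have h1a := hxlo a
            have h2a := hxhi a
            constructor <;> omega
        have hdoor' : fLab U (fun a => x a + if a = π 0 then 1 else 0)
            ((finRotate (n+1)).trans π) (n+1) = range (n+1) := by
          unfold fLab
          rw [fVerts_pivot0]
          exact hpdoor
        refine ⟨?_, ?_, ?_⟩
        · rw [hpiv, hmemE, mem_Doors_iff]
          refine ⟨⟨⟨hSx', mem_range.2 (by omega)⟩, hdoor'⟩, ?_⟩
          rintro ⟨-, hzero⟩
          simp only at hzero
          rw [rot_trans_last, if_pos rfl] at hzero
          have := hxlo (π 0)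
          omega
        · rw [hpiv, pivot_ktop]
          have e1 : (fun a => (x a + if a = π 0 then 1 else 0)
              - if a = ((finRotate (n+1)).trans π) (Fin.last n) then 1 else 0) = x := by
            funext a
            rw [rot_trans_last]
            split_ifs <;> ring
          have e2 : (finRotate (n+1)).symm.trans ((finRotate (n+1)).trans π) = π := by
            apply Equiv.ext
            intro a
            simp only [Equiv.trans_apply, Equiv.apply_symm_apply]
          rw [e1, e2]
        · rw [hpiv]
          intro hcon
          have := congrArg Prod.snd hcon
          simp only at this
          omega
      · by_cases hktop : k = n+1
        · -- pivot at the top vertex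
          subst hktop
          have hlast : ¬ (x (π (Fin.last n)) = 0) := by
            intro hc
            exact hpnb ⟨rfl, hc⟩
          have hpiv := pivot_ktop x π
          have hSx' : ((fun a => x a - if a = π (Fin.last n) then 1 else 0 : Fin (n+1) → ℤ),
              (finRotate (n+1)).symm.trans π) ∈ Sx (n+1) N := by
            rw [mem_Sx_iff]
            intro a
            simp only
            rw [Finset.mem_Icc]
            by_cases ha : a = π (Fin.last n)
            · rw [if_pos ha]
              have h1a := hxlo a
              have h2a := hxhi a
              have h3a : x a ≠ 0 := by rw [ha]; exact hlast
              constructor <;> omega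
            · rw [if_neg ha]
              have h1a := hxlo a
              have h2a := hxhi a
              constructor <;> omega
          have hdoor' : fLab U (fun a => x a - if a = π (Fin.last n) then 1 else 0)
              ((finRotate (n+1)).symm.trans π) 0 = range (n+1) := by
            unfold fLab
            rw [fVerts_pivotN]
            exact hpdoor
          refine ⟨?_, ?_, ?_⟩
          · rw [hpiv, hmemE, mem_Doors_iff]
            refine ⟨⟨⟨hSx', mem_range.2 (by omega)⟩, hdoor'⟩, ?_⟩
            rintro ⟨hzero, -⟩
            simp only at hzero
            omega
          · rw [hpiv, pivot_k0]
            have e1 : (fun a => (x a - if a = π (Fin.last n) then 1 else 0)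
                + if a = ((finRotate (n+1)).symm.trans π) 0 then 1 else 0) = x := by
              funext a
              rw [rotsymm_trans_zero]
              split_ifs <;> ring
            have e2 : (finRotate (n+1)).trans ((finRotate (n+1)).symm.trans π) = π := by
              apply Equiv.ext
              intro a
              simp only [Equiv.trans_apply, Equiv.symm_apply_apply]
            rw [e1, e2]
          · rw [hpiv]
            intro hcon
            have := congrArg Prod.snd hcon
            simp only at this
            omega
        · -- middle pivot
          have hk0 : k ≠ 0 := by omega
          have hkn : k ≤ n := by
            have := mem_range.mp hpk
            omega
          have hk1 : 1 ≤ k := hkpos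
          have hpiv := pivot_mid x π hk0 hktop
          have hdoor' : fLab U x
              ((Equiv.swap (((k-1 : ℕ) : Fin (n+1))) ((k : ℕ) : Fin (n+1))).trans π) k
              = range (n+1) := by
            unfold fLab
            rw [fVerts_swap x π hk1 hkn]
            exact hpdoor
          refine ⟨?_, ?_, ?_⟩
          · rw [hpiv, hmemE, mem_Doors_iff]
            refine ⟨⟨⟨?_, hpk⟩, hdoor'⟩, ?_⟩
            · rw [mem_Sx_iff]
              exact hx
            · rintro ⟨hzero, -⟩
              exact hktop hzero
          · rw [hpiv, pivot_mid x _ hk0 hktop]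
            have e2 : (Equiv.swap (((k-1 : ℕ) : Fin (n+1))) ((k : ℕ) : Fin (n+1))).trans
                ((Equiv.swap (((k-1 : ℕ) : Fin (n+1))) ((k : ℕ) : Fin (n+1))).trans π) = π := by
              apply Equiv.ext
              intro a
              simp only [Equiv.trans_apply, Equiv.swap_apply_self]
            rw [e2]
          · rw [hpiv]
            intro hcon
            have hππ := congrArg (fun t => t.1.2) hcon
            simp only at hππ
            have happ : ((Equiv.swap (((k-1 : ℕ) : Fin (n+1))) ((k : ℕ) : Fin (n+1))).trans π)
                (((k-1 : ℕ) : Fin (n+1))) = π (((k-1 : ℕ) : Fin (n+1))) := by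
              rw [hππ]
            rw [Equiv.trans_apply, Equiv.swap_apply_left] at happ
            have := π.injective happ
            have hv1 : ((((k : ℕ)) : Fin (n+1)) : ℕ) = k := Fin.val_cast_of_lt (by omega)
            have hv2 : ((((k-1 : ℕ)) : Fin (n+1)) : ℕ) = k - 1 := Fin.val_cast_of_lt (by omega)
            have := congrArg Fin.val this
            rw [hv1, hv2] at this
            omega
    have hEcard : ((((Doors (n+1) N U) \ Bd).card : ℕ) : ZMod 2) = 0 := by
      have hsum : ∑ _p ∈ (Doors (n+1) N U) \ Bd, (1 : ZMod 2) = 0 := by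
        apply Finset.sum_involution (fun p _ => pivot p)
        · intro p hp
          decide
        · intro p hp _
          exact (key p hp).2.2
        · intro p hp
          exact (key p hp).1
        · intro p hp
          exact (key p hp).2.1
      rw [Finset.sum_const, nsmul_eq_mul, mul_one] at hsum
      exact hsum
    -- Step D : boundary doors are exactly the lower-dimensional fully labeled simplices
    have hBcard : (FLset n N (lowerU U)).card = Bd.card := by
      apply Finset.card_bij (fun s _ => ((Fin.snoc s.1 0, liftPerm s.2), n+1))
      · rintro ⟨y, σ⟩ hs
        rw [FLset, Finset.mem_filter] at hs
        obtain ⟨hsSx, hsFL⟩ := hs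
        simp only at hsSx hsFL
        have hy : ∀ a, y a ∈ Finset.Icc (0:ℤ) ((N:ℤ)-1) := mem_Sx_iff.mp hsSx
        have hygrid : ∀ a, 0 ≤ y a ∧ y a ≤ (N:ℤ) := by
          intro a
          have := Finset.mem_Icc.mp (hy a)
          constructor <;> omega
        rw [hBd, Finset.mem_filter, mem_Doors_iff]
        refine ⟨⟨⟨?_, mem_range.2 (by omega)⟩, ?_⟩, rfl, ?_⟩
        · rw [mem_Sx_iff]
          intro a
          dsimp only
          cases a using Fin.lastCases with
          | last =>
            simp only [Fin.snoc_last]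
            exact Finset.mem_Icc.mpr ⟨le_refl 0, by omega⟩
          | cast i =>
            simp only [Fin.snoc_castSucc]
            exact hy i
        · show fLab U (Fin.snoc y 0) (liftPerm σ) (n+1) = range (n+1)
          rw [fLab_eq_image, erase_top_range (n+1)]
          have hcong : ∀ j ∈ range (n+1),
              lab U (vtx (Fin.snoc y 0) (liftPerm σ) j) = lab (lowerU U) (vtx y σ j) := by
            intro j hj
            have hjn : j ≤ n := Nat.lt_succ_iff.mp (mem_range.mp hj)
            rw [vtx_snoc y σ hjn]
            exact lab_snoc U h0 _ (vtx_grid σ hy j)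
          rw [Finset.image_congr hcong]
          exact hsFL
        · show (Fin.snoc y 0 : Fin (n+1) → ℤ) ((liftPerm σ) (Fin.last n)) = 0
          rw [liftPerm_last]
          simp only [Fin.snoc_last]
      · rintro ⟨y, σ⟩ hs ⟨y', σ'⟩ hs' heq
        simp only [Prod.mk.injEq] at heq
        obtain ⟨⟨hsnoc, hlift⟩, -⟩ := heq
        have hy : y = y' := by
          funext i
          have := congrFun hsnoc (Fin.castSucc i)
          simpa using this
        have hσ : σ = σ' := by
          apply Equiv.ext
          intro i
          have := congrArg (fun e => e (Fin.castSucc i)) hlift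
          simp only [liftPerm_castSucc] at this
          exact Fin.castSucc_injective n this
        rw [Prod.mk.injEq]
        exact ⟨hy, hσ⟩
      · rintro ⟨⟨x, π⟩, k⟩ hp
        rw [hBd, Finset.mem_filter] at hp
        obtain ⟨hpD, hk, hlast0⟩ := hp
        simp only at hk hlast0
        subst hk
        rw [mem_Doors_iff] at hpD
        obtain ⟨⟨hpSx, -⟩, hpdoor⟩ := hpD
        simp only at hpSx hpdoor
        have hx : ∀ a, x a ∈ Finset.Icc (0:ℤ) ((N:ℤ)-1) := mem_Sx_iff.mp hpSx
        have hπl : π (Fin.last n) = Fin.last n := bdry_pi_last h0 hx hpdoor hlast0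
        have hxlast : x (Fin.last n) = 0 := by
          rw [hπl] at hlast0
          exact hlast0
        have hne1 : ∀ i : Fin n, π i.castSucc ≠ Fin.last n := by
          intro i hc
          have : i.castSucc = Fin.last n := π.injective (by rw [hc, hπl])
          exact (Fin.castSucc_lt_last i).ne this
        have hne2 : ∀ i : Fin n, π.symm i.castSucc ≠ Fin.last n := by
          intro i hc
          have h5 : i.castSucc = π (Fin.last n) := by rw [← hc, Equiv.apply_symm_apply]
          rw [hπl] at h5
          exact (Fin.castSucc_lt_last i).ne h5
        set σ : Equiv.Perm (Fin n) :=
          { toFun := fun i => (π i.castSucc).castPred (hne1 i),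
            invFun := fun i => (π.symm i.castSucc).castPred (hne2 i),
            left_inv := by
              intro i
              simp [Fin.castSucc_castPred]
            right_inv := by
              intro i
              simp [Fin.castSucc_castPred] } with hσdef
        have hσapp : ∀ i : Fin n, σ i = (π i.castSucc).castPred (hne1 i) := fun i => rfl
        have hliftσ : liftPerm σ = π := by
          apply Equiv.ext
          intro a
          cases a using Fin.lastCases with
          | last => rw [liftPerm_last, hπl]
          | cast i =>
            rw [liftPerm_castSucc, hσapp i, Fin.castSucc_castPred]
        have hsnocx : (Fin.snoc (fun i : Fin n => x i.castSucc) 0 : Fin (n+1) → ℤ) = x := by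
          funext a
          cases a using Fin.lastCases with
          | last =>
            simp only [Fin.snoc_last]
            exact hxlast.symm
          | cast i =>
            simp only [Fin.snoc_castSucc]
        refine ⟨(fun i => x i.castSucc, σ), ?_, ?_⟩
        · rw [FLset, Finset.mem_filter]
          constructor
          · rw [mem_Sx_iff]
            intro a
            exact hx a.castSucc
          · show ((range (n+1)).image fun j =>
              lab (lowerU U) (vtx (fun i => x i.castSucc) σ j)) = range (n+1)
            have hycast : ∀ a : Fin n, (fun i : Fin n => x i.castSucc) a
                ∈ Finset.Icc (0:ℤ) ((N:ℤ)-1) := fun a => hx a.castSucc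
            have hcong : ∀ j ∈ range (n+1),
                lab (lowerU U) (vtx (fun i => x i.castSucc) σ j) = lab U (vtx x π j) := by
              intro j hj
              have hjn : j ≤ n := Nat.lt_succ_iff.mp (mem_range.mp hj)
              rw [← lab_snoc U h0 _ (vtx_grid _ hycast j)]
              congr 1
              rw [← vtx_snoc _ _ hjn, hsnocx, hliftσ]
            rw [Finset.image_congr hcong]
            have hfin := hpdoor
            rw [fLab_eq_image, erase_top_range (n+1)] at hfin
            exact hfin
        · show ((Fin.snoc (fun i : Fin n => x i.castSucc) 0, liftPerm σ), n+1) = ((x, π), n+1)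
          rw [hsnocx, hliftσ]
    -- final assembly
    have hsplit : (Doors (n+1) N U).card = ((Doors (n+1) N U) \ Bd).card + Bd.card :=
      (Finset.card_sdiff_add_card_eq_card hBsub).symm
    rw [← hAcast, hsplit, Nat.cast_add, hEcard, zero_add, ← hBcard]
    exact ihres

/-- Discrete theorem: a completely mixed cell exists. -/
theorem exists_mixed_cell (n N : ℕ) (hN : 1 ≤ N) (U : Fin n → Set (Fin n → ℤ))
    (h0 : ∀ v : Fin n → ℤ, (∀ a, 0 ≤ v a ∧ v a ≤ (N:ℤ)) → ∀ i, v i = 0 → v ∈ U i)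
    (h1 : ∀ v : Fin n → ℤ, (∀ a, 0 ≤ v a ∧ v a ≤ (N:ℤ)) → ∀ i, v i = (N:ℤ) → v ∉ U i) :
    ∃ c : Fin n → ℤ, (∀ a, 0 ≤ c a ∧ c a + 1 ≤ (N:ℤ)) ∧
      ∀ i : Fin n,
        (∃ v : Fin n → ℤ, (∀ a, v a = c a ∨ v a = c a + 1) ∧ v ∈ U i) ∧
        (∃ v : Fin n → ℤ, (∀ a, v a = c a ∨ v a = c a + 1) ∧ v ∉ U i) := by
  classical
  have hodd := FL_odd n N hN U h0 h1
  have hne : (FLset n N U).Nonempty := by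
    by_contra h
    rw [Finset.not_nonempty_iff_eq_empty] at h
    rw [h, Finset.card_empty] at hodd
    simp at hodd
  obtain ⟨s, hs⟩ := hne
  rw [FLset, Finset.mem_filter] at hs
  obtain ⟨hsSx, hsFL⟩ := hs
  have hx : ∀ a, s.1 a ∈ Finset.Icc (0:ℤ) ((N:ℤ)-1) := mem_Sx_iff.mp hsSx
  have hvor : ∀ j : ℕ, ∀ a, vtx s.1 s.2 j a = s.1 a ∨ vtx s.1 s.2 j a = s.1 a + 1 := by
    intro j a
    unfold vtx
    split_ifs
    · exact Or.inr rfl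
    · exact Or.inl (by ring)
  refine ⟨s.1, ?_, ?_⟩
  · intro a
    have := Finset.mem_Icc.mp (hx a)
    constructor <;> omega
  · intro i
    constructor
    · have h0mem : (0:ℕ) ∈ (range (n+1)).image (fun j => lab U (vtx s.1 s.2 j)) := by
        rw [hsFL]
        exact mem_range.2 (by omega)
      obtain ⟨j, _, hlab⟩ := Finset.mem_image.mp h0mem
      exact ⟨vtx s.1 s.2 j, hvor j, lab_eq_zero hlab i⟩
    · have hmem : ((i:ℕ)+1) ∈ (range (n+1)).image (fun j => lab U (vtx s.1 s.2 j)) := by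
        rw [hsFL]
        exact mem_range.2 (by omega)
      obtain ⟨j, _, hlab⟩ := Finset.mem_image.mp hmem
      exact ⟨vtx s.1 s.2 j, hvor j, lab_eq_succ hlab⟩

/-- Continuum separator-intersection theorem: if for each `i`, `(F₀ i, F₁ i)` is a pair of
closed sets covering the cube, with the bottom face avoiding `F₁`'s side (i.e. contained in
`F₀ i` and the top face outside `F₀ i`), then all the "interfaces" `F₀ i ∩ F₁ i` have a
common point in the cube. -/
theorem separator_intersection (n : ℕ) (F₀ F₁ : Fin n → Set (Fin n → ℝ))
    (hF₀c : ∀ i, IsClosed (F₀ i)) (hF₁c : ∀ i, IsClosed (F₁ i))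
    (hcover : ∀ i, Set.Icc (0 : Fin n → ℝ) 1 ⊆ F₀ i ∪ F₁ i)
    (hface0 : ∀ i, ∀ x ∈ Set.Icc (0 : Fin n → ℝ) 1, x i = 0 → x ∈ F₀ i)
    (hface1 : ∀ i, ∀ x ∈ Set.Icc (0 : Fin n → ℝ) 1, x i = 1 → x ∉ F₀ i) :
    ∃ x ∈ Set.Icc (0 : Fin n → ℝ) 1, ∀ i, x ∈ F₀ i ∩ F₁ i := by
  classical
  -- discretization
  set pt : ℕ → (Fin n → ℤ) → (Fin n → ℝ) := fun N v a => (v a : ℝ) / (N : ℝ) with hpt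
  have hptIcc : ∀ (N : ℕ), 1 ≤ N → ∀ v : Fin n → ℤ, (∀ a, 0 ≤ v a ∧ v a ≤ (N:ℤ)) →
      pt N v ∈ Set.Icc (0 : Fin n → ℝ) 1 := by
    intro N hN v hv
    rw [Set.mem_Icc]
    constructor <;> intro a
    · have h1a := (hv a).1
      have hNpos : (0:ℝ) < N := by exact_mod_cast hN
      show (0:ℝ) ≤ (v a : ℝ) / N
      apply div_nonneg _ (le_of_lt hNpos)
      exact_mod_cast h1a
    · have h2a := (hv a).2
      have hNpos : (0:ℝ) < N := by exact_mod_cast hN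
      show (v a : ℝ) / N ≤ 1
      rw [div_le_one hNpos]
      exact_mod_cast h2a
  have hU : ∀ N : ℕ, 1 ≤ N → ∃ c : Fin n → ℤ, (∀ a, 0 ≤ c a ∧ c a + 1 ≤ (N:ℤ)) ∧
      ∀ i : Fin n,
        (∃ v : Fin n → ℤ, (∀ a, v a = c a ∨ v a = c a + 1) ∧ pt N v ∈ F₀ i) ∧
        (∃ v : Fin n → ℤ, (∀ a, v a = c a ∨ v a = c a + 1) ∧ ¬(pt N v ∈ F₀ i)) := by
    intro N hN
    apply exists_mixed_cell n N hN (fun i => {v | pt N v ∈ F₀ i})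
    · intro v hv i hvi
      apply hface0 i _ (hptIcc N hN v hv)
      show (v i : ℝ) / N = 0
      rw [hvi]
      simp
    · intro v hv i hvi
      apply hface1 i _ (hptIcc N hN v hv)
      show (v i : ℝ) / N = 1
      rw [hvi]
      have hNpos : (0:ℝ) < N := by exact_mod_cast hN
      field_simp
      exact Int.cast_natCast N
  -- choose cells
  choose! c hc1 hc2 using hU
  -- the cell base points, as a sequence
  set xs : ℕ → (Fin n → ℝ) := fun m => pt (m+1) (c (m+1)) with hxs
  have hxsIcc : ∀ m, xs m ∈ Set.Icc (0 : Fin n → ℝ) 1 := by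
    intro m
    apply hptIcc (m+1) (by omega)
    intro a
    have := hc1 (m+1) (by omega) a
    omega
  obtain ⟨x, hxIcc, φ, hφmono, hφconv⟩ :=
    (isCompact_Icc : IsCompact (Set.Icc (0 : Fin n → ℝ) 1)).tendsto_subseq hxsIcc
  refine ⟨x, hxIcc, ?_⟩
  -- distance of cell vertices to the base point
  have hdist : ∀ m : ℕ, ∀ v : Fin n → ℤ, (∀ a, v a = c (m+1) a ∨ v a = c (m+1) a + 1) →
      dist (pt (m+1) v) (xs m) ≤ 1 / (m+1 : ℝ) := by
    intro m v hv
    have hpos : (0:ℝ) < m+1 := by positivity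
    rw [dist_pi_le_iff (by positivity)]
    intro b
    rw [Real.dist_eq]
    have : (pt (m+1) v) b - (xs m) b = ((v b : ℝ) - (c (m+1) b : ℝ)) / (m+1 : ℝ) := by
      rw [hxs, hpt]
      push_cast
      ring
    rw [this, abs_div, abs_of_pos hpos, div_le_div_iff_of_pos_right hpos]  -- maybe wrong lemma name
    rcases hv b with h | h <;> rw [h] <;> simp [abs_of_nonneg]
  intro i
  -- sequences of witnesses
  have hw : ∀ m : ℕ, ∃ u w : Fin n → ℝ,
      (u ∈ Set.Icc (0:Fin n → ℝ) 1 ∧ u ∈ F₀ i ∧ dist u (xs m) ≤ 1/(m+1 : ℝ)) ∧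
      (w ∈ Set.Icc (0:Fin n → ℝ) 1 ∧ w ∈ F₁ i ∧ dist w (xs m) ≤ 1/(m+1 : ℝ)) := by
    intro m
    obtain ⟨⟨vu, hvu, hvuF⟩, ⟨vw, hvw, hvwF⟩⟩ := hc2 (m+1) (by omega) i
    have hgrid : ∀ v : Fin n → ℤ, (∀ a, v a = c (m+1) a ∨ v a = c (m+1) a + 1) →
        (∀ a, 0 ≤ v a ∧ v a ≤ ((m+1 : ℕ):ℤ)) := by
      intro v hv a
      have := hc1 (m+1) (by omega) a
      rcases hv a with h | h <;> rw [h] <;> omega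
    have hwIcc : pt (m+1) vw ∈ Set.Icc (0:Fin n → ℝ) 1 := hptIcc (m+1) (by omega) _ (hgrid vw hvw)
    refine ⟨pt (m+1) vu, pt (m+1) vw,
      ⟨hptIcc (m+1) (by omega) _ (hgrid vu hvu), hvuF, hdist m vu hvu⟩,
      ⟨hwIcc, ?_, hdist m vw hvw⟩⟩
    rcases hcover i hwIcc with h | h
    · exact absurd h hvwF
    · exact h
  choose us ws hus hws using hw
  -- limits
  have hbound : Tendsto (fun m : ℕ => 1/((φ m : ℝ)+1)) atTop (𝓝 0) := by
    apply Tendsto.comp tendsto_one_div_add_atTop_nhds_zero_nat hφmono.tendsto_atTop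
  have hxsconv : Tendsto (fun m => dist (xs (φ m)) x) atTop (𝓝 0) :=
    tendsto_iff_dist_tendsto_zero.mp hφconv
  have husconv : Tendsto (us ∘ φ) atTop (𝓝 x) := by
    rw [tendsto_iff_dist_tendsto_zero]
    apply squeeze_zero (fun m => dist_nonneg)
      (g := fun m => 1/((φ m : ℝ)+1) + dist (xs (φ m)) x)
    · intro m
      calc dist (us (φ m)) x ≤ dist (us (φ m)) (xs (φ m)) + dist (xs (φ m)) x := dist_triangle _ _ _
      _ ≤ 1/((φ m : ℝ)+1) + dist (xs (φ m)) x := by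
          have := (hus (φ m)).2.2
          push_cast at this ⊢
          linarith
    · simpa using hbound.add hxsconv
  have hwsconv : Tendsto (ws ∘ φ) atTop (𝓝 x) := by
    rw [tendsto_iff_dist_tendsto_zero]
    apply squeeze_zero (fun m => dist_nonneg)
      (g := fun m => 1/((φ m : ℝ)+1) + dist (xs (φ m)) x)
    · intro m
      calc dist (ws (φ m)) x ≤ dist (ws (φ m)) (xs (φ m)) + dist (xs (φ m)) x := dist_triangle _ _ _
      _ ≤ 1/((φ m : ℝ)+1) + dist (xs (φ m)) x := by
          have := (hws (φ m)).2.2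
          push_cast at this ⊢
          linarith
    · simpa using hbound.add hxsconv
  constructor
  · exact (hF₀c i).mem_of_tendsto husconv (Filter.Eventually.of_forall fun m => (hus (φ m)).2.1)
  · exact (hF₁c i).mem_of_tendsto hwsconv (Filter.Eventually.of_forall fun m => (hws (φ m)).2.1)

/-- If no preconnected subset of a compact set `K` meets both `A` and `B`, then `K` splits
into two disjoint compact pieces, one containing `K ∩ A`, the other `K ∩ B`. -/
theorem clopen_split {E : Type*} [TopologicalSpace E] [T2Space E] {K A B : Set E}
    (hK : IsCompact K) (hA : IsClosed A) (hB : IsClosed B)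
    (hsep : ∀ C : Set E, C ⊆ K → IsPreconnected C →
      ¬((C ∩ A).Nonempty ∧ (C ∩ B).Nonempty)) :
    ∃ K₀ K₁ : Set E, K = K₀ ∪ K₁ ∧ IsCompact K₀ ∧ IsCompact K₁ ∧ K₀ ∩ K₁ = ∅ ∧
      K ∩ A ⊆ K₀ ∧ K ∩ B ⊆ K₁ := by
  classical
  haveI : CompactSpace ↥K := isCompact_iff_compactSpace.mp hK
  set A' : Set ↥K := Subtype.val ⁻¹' A with hA'
  set B' : Set ↥K := Subtype.val ⁻¹' B with hB'
  have hA'c : IsClosed A' := hA.preimage continuous_subtype_val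
  have hB'c : IsClosed B' := hB.preimage continuous_subtype_val
  have hA'comp : IsCompact A' := hA'c.isCompact
  have hB'comp : IsCompact B' := hB'c.isCompact
  -- each point of A' has a clopen neighbourhood avoiding B'
  have hZ : ∀ x : ↥K, x ∈ A' → ∃ Z : Set ↥K, IsClopen Z ∧ x ∈ Z ∧ Z ∩ B' = ∅ := by
    intro x hx
    have hcomp : connectedComponent x ∩ B' = ∅ := by
      by_contra h
      obtain ⟨y, hy1, hy2⟩ := Set.nonempty_iff_ne_empty.mpr h
      apply hsep (Subtype.val '' connectedComponent x)
      · rintro _ ⟨z, -, rfl⟩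
        exact z.2
      · exact isPreconnected_connectedComponent.image _ continuous_subtype_val.continuousOn
      constructor
      · exact ⟨x.val, Set.mem_image_of_mem _ mem_connectedComponent, hx⟩
      · exact ⟨y.val, Set.mem_image_of_mem _ hy1, hy2⟩
    rw [connectedComponent_eq_iInter_isClopen] at hcomp
    haveI : Nonempty {Z : Set ↥K // IsClopen Z ∧ x ∈ Z} :=
      ⟨⟨Set.univ, isClopen_univ, Set.mem_univ x⟩⟩
    -- compactness: finitely many clopens suffice
    have hdir : Directed (· ⊇ ·)
        (fun Z : {Z : Set ↥K // IsClopen Z ∧ x ∈ Z} => (Z : Set ↥K)) := by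
      rintro ⟨Z₁, hZ₁, hxZ₁⟩ ⟨Z₂, hZ₂, hxZ₂⟩
      exact ⟨⟨Z₁ ∩ Z₂, hZ₁.inter hZ₂, ⟨hxZ₁, hxZ₂⟩⟩,
        Set.inter_subset_left, Set.inter_subset_right⟩
    have hclosed : ∀ Z : {Z : Set ↥K // IsClopen Z ∧ x ∈ Z}, IsClosed (Z : Set ↥K) :=
      fun Z => Z.2.1.isClosed
    have hempty : B' ∩ ⋂ Z : {Z : Set ↥K // IsClopen Z ∧ x ∈ Z}, (Z : Set ↥K) = ∅ := by
      rw [Set.inter_comm] at hcomp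
      exact hcomp
    obtain ⟨Z, hZe⟩ := hB'comp.elim_directed_family_closed _ hclosed hempty hdir
    exact ⟨Z, Z.2.1, Z.2.2, by rw [Set.inter_comm]; exact hZe⟩
  choose! Z hZclopen hZmem hZB using hZ
  obtain ⟨b', hb'sub, hb'fin, hb'cover⟩ :=
    hA'comp.elim_finite_subcover_image (fun x hx => (hZclopen x hx).isOpen)
      (fun x hx => Set.mem_biUnion hx (hZmem x hx))
  set W : Set ↥K := ⋃ x ∈ b', Z x with hW
  have hWclopen : IsClopen W := by
    apply hb'fin.isClopen_biUnion
    intro x hx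
    exact hZclopen x (hb'sub hx)
  have hWA : A' ⊆ W := hb'cover
  have hWB : W ∩ B' = ∅ := by
    rw [Set.eq_empty_iff_forall_notMem]
    rintro y ⟨hyW, hyB⟩
    rw [hW, Set.mem_iUnion₂] at hyW
    obtain ⟨x, hx, hyZ⟩ := hyW
    have := hZB x (hb'sub hx)
    rw [Set.eq_empty_iff_forall_notMem] at this
    exact this y ⟨hyZ, hyB⟩
  refine ⟨Subtype.val '' W, Subtype.val '' Wᶜ, ?_, ?_, ?_, ?_, ?_, ?_⟩
  · rw [← Set.image_union, Set.union_compl_self, Set.image_univ, Subtype.range_coe]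
  · exact (hWclopen.isClosed.isCompact).image continuous_subtype_val
  · exact (hWclopen.compl.isClosed.isCompact).image continuous_subtype_val
  · rw [← Set.image_inter Subtype.val_injective, Set.inter_compl_self, Set.image_empty]
  · rintro y ⟨hyK, hyA⟩
    exact ⟨⟨y, hyK⟩, hWA hyA, rfl⟩
  · rintro y ⟨hyK, hyB⟩
    refine ⟨⟨y, hyK⟩, ?_, rfl⟩
    intro hyW
    rw [Set.eq_empty_iff_forall_notMem] at hWB
    exact hWB ⟨y, hyK⟩ ⟨hyW, hyB⟩

/-! ### Brick decomposition of `ℝ^m` into `m+1` classes of disjoint small closed pieces -/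

/-- thresholds -/
noncomputable def tj (m : ℕ) (j : ℕ) : ℝ := j / (4*(m+1))

theorem tj_nonneg (m j : ℕ) : 0 ≤ tj m j := by unfold tj; positivity

theorem tj_lt (m : ℕ) {j j' : ℕ} (h : j < j') : tj m j < tj m j' := by
  unfold tj
  rw [div_lt_div_iff_of_pos_right (by positivity)]
  exact_mod_cast h

theorem tj_le_quarter (m : ℕ) {j : ℕ} (h : j ≤ m + 1) : tj m j ≤ 1/4 := by
  unfold tj
  rw [div_le_div_iff₀ (by positivity) (by norm_num)]
  have : (j:ℝ) ≤ (m:ℝ) + 1 := by exact_mod_cast h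
  linarith

theorem tj_one_le {m j : ℕ} (h : 1 ≤ j) : 1/(4*((m:ℝ)+1)) ≤ tj m j := by
  unfold tj
  rw [div_le_div_iff_of_pos_right (by positivity)]
  exact_mod_cast h

/-- a single coordinate constraint of a piece -/
noncomputable def pieceCoord (m : ℕ) (ε : ℝ) (j : ℕ) (z : ℤ) (b : Bool) : Set ℝ :=
  if b then {r : ℝ | |r/ε - z| ≤ tj m j}
  else {r : ℝ | (z:ℝ) + tj m (j+1) ≤ r/ε ∧ r/ε ≤ (z:ℝ) + 1 - tj m (j+1)}

/-- a closed piece of class `j` -/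
noncomputable def piece (m : ℕ) (ε : ℝ) (j : ℕ) (z : Fin m → ℤ) (b : Fin m → Bool) :
    Set (Fin m → ℝ) :=
  {y | ∀ a, y a ∈ pieceCoord m ε j (z a) (b a)}

theorem piece_isClosed (m : ℕ) (ε : ℝ) (j : ℕ) (z : Fin m → ℤ) (b : Fin m → Bool) :
    IsClosed (piece m ε j z b) := by
  have heq : piece m ε j z b
      = ⋂ a, (fun y : Fin m → ℝ => y a) ⁻¹' pieceCoord m ε j (z a) (b a) := by
    ext y
    simp [piece, Set.mem_iInter]
  rw [heq]
  apply isClosed_iInter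
  intro a
  apply IsClosed.preimage (continuous_apply a)
  unfold pieceCoord
  have hcont : Continuous (fun r : ℝ => r / ε) := continuous_id.div_const ε
  split_ifs
  · exact isClosed_le ((hcont.sub continuous_const).abs) continuous_const
  · have h1 : IsClosed {r : ℝ | ((z a):ℝ) + tj m (j+1) ≤ r/ε} :=
      isClosed_le continuous_const hcont
    have h2 : IsClosed {r : ℝ | r/ε ≤ ((z a):ℝ) + 1 - tj m (j+1)} :=
      isClosed_le hcont continuous_const
    exact h1.inter h2

theorem piece_dist {m : ℕ} {ε : ℝ} (hε : 0 < ε) {j : ℕ} (hj : j ≤ m)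
    {z : Fin m → ℤ} {b : Fin m → Bool} {y y' : Fin m → ℝ}
    (hy : y ∈ piece m ε j z b) (hy' : y' ∈ piece m ε j z b) :
    dist y y' < ε := by
  rw [dist_pi_lt_iff hε]
  intro a
  have h1 := hy a
  have h2 := hy' a
  rw [Real.dist_eq]
  have hm1 : (1:ℝ) ≤ (m:ℝ) + 1 := by
    have : (0:ℝ) ≤ (m:ℝ) := Nat.cast_nonneg m
    linarith
  have hhalf : 1/(2*((m:ℝ)+1)) ≤ 1/2 := by
    rw [div_le_div_iff₀ (by positivity) (by norm_num)]
    linarith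
  have hcoord : |y a / ε - y' a / ε| ≤ 1 - 1/(2*((m:ℝ)+1)) := by
    unfold pieceCoord at h1 h2
    by_cases hb : b a = true
    · rw [if_pos hb] at h1 h2
      simp only [Set.mem_setOf_eq] at h1 h2
      have hq : tj m j ≤ 1/4 := tj_le_quarter m (by omega)
      rw [abs_le] at h1 h2 ⊢
      constructor <;> nlinarith
    · rw [if_neg hb] at h1 h2
      simp only [Set.mem_setOf_eq] at h1 h2
      have ht1 : 1/(4*((m:ℝ)+1)) ≤ tj m (j+1) := tj_one_le (by omega)
      rw [abs_le]
      have e1 : 2 * (1/(4*((m:ℝ)+1))) = 1/(2*((m:ℝ)+1)) := by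
        field_simp
        ring
      constructor <;> nlinarith
  have habs : |y a - y' a| = ε * |y a / ε - y' a / ε| := by
    have e : y a / ε - y' a / ε = (y a - y' a) / ε := by ring
    rw [e, abs_div, abs_of_pos hε]
    field_simp
  rw [habs]
  have hpos : (0:ℝ) < 1/(2*((m:ℝ)+1)) := by positivity
  calc ε * |y a / ε - y' a / ε| ≤ ε * (1 - 1/(2*((m:ℝ)+1))) :=
        mul_le_mul_of_nonneg_left hcoord (le_of_lt hε)
  _ < ε * 1 := by
        apply mul_lt_mul_of_pos_left _ hε
        linarith
  _ = ε := mul_one ε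

theorem piece_cover {m : ℕ} {ε : ℝ} (hε : 0 < ε) (y : Fin m → ℝ) :
    ∃ j ≤ m, ∃ z : Fin m → ℤ, ∃ b : Fin m → Bool,
      y ∈ piece m ε j z b ∧ ∀ a, |(z a : ℝ)| ≤ |y a|/ε + 1 := by
  classical
  set r : Fin m → ℝ := fun a => y a / ε with hr
  set d : Fin m → ℝ := fun a => min (Int.fract (r a)) (1 - Int.fract (r a)) with hd
  have hgood : ∃ j ≤ m, ∀ a, ¬ (tj m j < d a ∧ d a < tj m (j+1)) := by
    by_contra hcon
    push_neg at hcon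
    rcases Nat.eq_zero_or_pos m with hm0 | hmpos
    · obtain ⟨a, -⟩ := hcon 0 (by omega)
      exact absurd a.isLt (by omega)
    haveI : Nonempty (Fin m) := ⟨⟨0, hmpos⟩⟩
    have hcon2 : ∀ j : ℕ, ∃ a : Fin m, j ≤ m → (tj m j < d a ∧ d a < tj m (j+1)) := by
      intro j
      by_cases hjm : j ≤ m
      · obtain ⟨a, ha⟩ := hcon j hjm
        exact ⟨a, fun _ => ha⟩
      · exact ⟨Classical.arbitrary _, fun h => absurd h hjm⟩
    choose w hw using hcon2
    have hw1 : ∀ j, j ≤ m → tj m j < d (w j) := fun j hj => (hw j hj).1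
    have hw2 : ∀ j, j ≤ m → d (w j) < tj m (j+1) := fun j hj => (hw j hj).2
    have hinj : Set.InjOn w ((range (m+1) : Finset ℕ) : Set ℕ) := by
      intro j₁ hj₁ j₂ hj₂ heq
      by_contra hne
      rw [Finset.mem_coe, Finset.mem_range] at hj₁ hj₂
      rcases Nat.lt_or_ge j₁ j₂ with hlt | hge
      · have hA := hw2 j₁ (by omega)
        have hB := hw1 j₂ (by omega)
        rw [heq] at hA
        have hle : tj m (j₁+1) ≤ tj m j₂ := by
          rcases Nat.lt_or_ge (j₁+1) j₂ with h | h
          · exact le_of_lt (tj_lt m h)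
          · have he : j₁ + 1 = j₂ := by omega
            rw [he]
        linarith
      · have hlt : j₂ < j₁ := by omega
        have hA := hw2 j₂ (by omega)
        have hB := hw1 j₁ (by omega)
        rw [heq] at hB
        have hle : tj m (j₂+1) ≤ tj m j₁ := by
          rcases Nat.lt_or_ge (j₂+1) j₁ with h | h
          · exact le_of_lt (tj_lt m h)
          · have he : j₂ + 1 = j₁ := by omega
            rw [he]
        linarith
    have hcard := Finset.card_le_card_of_injOn w
      (fun j _ => Finset.mem_univ (w j)) hinj
    rw [Finset.card_range, Finset.card_univ, Fintype.card_fin] at hcard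
    omega
  obtain ⟨j, hj, hgap⟩ := hgood
  set zf : Fin m → ℤ := fun a =>
    if d a ≤ tj m j then (if Int.fract (r a) ≤ 1/2 then ⌊r a⌋ else ⌊r a⌋ + 1) else ⌊r a⌋
    with hzf
  refine ⟨j, hj, zf, fun a => decide (d a ≤ tj m j), ?_, ?_⟩
  · intro a
    have hfr : r a - ⌊r a⌋ = Int.fract (r a) := Int.self_sub_floor (r a)
    have hfr0 : 0 ≤ Int.fract (r a) := Int.fract_nonneg (r a)
    have hfr1 : Int.fract (r a) < 1 := Int.fract_lt_one (r a)
    show y a ∈ pieceCoord m ε j (zf a) (decide (d a ≤ tj m j))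
    unfold pieceCoord
    by_cases hda : d a ≤ tj m j
    · have hbtrue : (decide (d a ≤ tj m j)) = true := by
        rw [decide_eq_true_eq]
        exact hda
      rw [if_pos hbtrue]
      simp only [Set.mem_setOf_eq, hzf]
      rw [if_pos hda]
      have hda' : min (Int.fract (r a)) (1 - Int.fract (r a)) ≤ tj m j := hda
      by_cases hh : Int.fract (r a) ≤ 1/2
      · rw [if_pos hh]
        have h5 : Int.fract (r a) ≤ tj m j := by
          rwa [min_eq_left (by linarith : Int.fract (r a) ≤ 1 - Int.fract (r a))] at hda'
        rw [show y a / ε = r a from rfl]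
        rw [abs_of_nonneg (by linarith)]
        linarith
      · rw [if_neg hh]
        have h5 : 1 - Int.fract (r a) ≤ tj m j := by
          rwa [min_eq_right (by linarith : 1 - Int.fract (r a) ≤ Int.fract (r a))] at hda'
        rw [show y a / ε = r a from rfl]
        push_cast
        rw [abs_of_nonpos (by linarith)]
        linarith
    · have hbfalse : (decide (d a ≤ tj m j)) = false := by
        rw [decide_eq_false_iff_not]
        exact hda
      rw [hbfalse, if_neg Bool.false_ne_true]
      simp only [Set.mem_setOf_eq, hzf]
      rw [if_neg hda]
      have hge : tj m (j+1) ≤ d a := by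
        by_contra hlt
        push_neg at hlt
        exact hgap a ⟨lt_of_not_ge hda, hlt⟩
      have hd1 : tj m (j+1) ≤ Int.fract (r a) := le_trans hge (min_le_left _ _)
      have hd2 : tj m (j+1) ≤ 1 - Int.fract (r a) := le_trans hge (min_le_right _ _)
      rw [show y a / ε = r a from rfl]
      constructor <;> linarith
  · intro a
    have hfl : (⌊r a⌋:ℝ) ≤ r a := Int.floor_le (r a)
    have hfl2 : r a < ⌊r a⌋ + 1 := Int.lt_floor_add_one (r a)
    have hra : |r a| = |y a|/ε := by
      rw [hr]
      show |y a / ε| = |y a|/ε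
      rw [abs_div, abs_of_pos hε]
    have hzb : (zf a : ℝ) = (⌊r a⌋:ℝ) ∨ (zf a : ℝ) = (⌊r a⌋:ℝ) + 1 := by
      simp only [hzf]
      split_ifs
      · exact Or.inl rfl
      · exact Or.inr (by push_cast; ring)
      · exact Or.inl rfl
    have h1 : -(|y a|/ε) ≤ r a := by
      rw [← hra]
      exact neg_abs_le (r a)
    have h2 : r a ≤ |y a|/ε := by
      rw [← hra]
      exact le_abs_self (r a)
    rcases hzb with h | h <;> rw [h] <;> rw [abs_le] <;> constructor <;> linarith

theorem piece_disjoint {m : ℕ} {ε : ℝ} (hε : 0 < ε) {j : ℕ} (hj : j ≤ m)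
    {z z' : Fin m → ℤ} {b b' : Fin m → Bool} {y : Fin m → ℝ}
    (h1 : y ∈ piece m ε j z b) (h2 : y ∈ piece m ε j z' b') : z = z' ∧ b = b' := by
  have key : ∀ a, z a = z' a ∧ b a = b' a := by
    intro a
    have c1 := h1 a
    have c2 := h2 a
    have htjq : tj m j ≤ 1/4 := tj_le_quarter m (by omega)
    have htlt : tj m j < tj m (j+1) := tj_lt m (by omega)
    have ht0 : 0 ≤ tj m j := tj_nonneg m j
    have htpos : 0 < tj m (j+1) := lt_of_le_of_lt ht0 htlt
    have htq' : tj m (j+1) ≤ 1/4 := tj_le_quarter m (by omega)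
    unfold pieceCoord at c1 c2
    have hfar : ∀ (w : ℤ), ((w:ℝ) + tj m (j+1) ≤ y a / ε ∧ y a / ε ≤ (w:ℝ) + 1 - tj m (j+1)) →
        ∀ k : ℤ, tj m (j+1) ≤ |y a / ε - k| := by
      rintro w ⟨hw1, hw2⟩ k
      rcases le_or_gt (k:ℝ) (w:ℝ) with h | h
      · rw [abs_of_nonneg (by linarith)]
        linarith
      · have hk : (w:ℝ) + 1 ≤ k := by
          have hwk : w < k := by exact_mod_cast h
          have : w + 1 ≤ k := hwk
          exact_mod_cast this
        rw [abs_of_nonpos (by linarith)]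
        linarith
    cases hba : b a with
    | false =>
      cases hba' : b' a with
      | false =>
        rw [hba, if_neg Bool.false_ne_true] at c1
        rw [hba', if_neg Bool.false_ne_true] at c2
        simp only [Set.mem_setOf_eq] at c1 c2
        refine ⟨?_, rfl⟩
        by_contra hne
        rcases lt_or_gt_of_ne hne with h | h
        · have hc : (z a : ℝ) + 1 ≤ (z' a : ℝ) := by exact_mod_cast h
          linarith [c1.2, c2.1]
        · have hc : (z' a : ℝ) + 1 ≤ (z a : ℝ) := by exact_mod_cast h
          linarith [c1.1, c2.2]
      | true =>
        exfalso
        rw [hba, if_neg Bool.false_ne_true] at c1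
        rw [hba', if_pos rfl] at c2
        simp only [Set.mem_setOf_eq] at c1 c2
        linarith [le_trans (hfar (z a) c1 (z' a)) c2]
    | true =>
      cases hba' : b' a with
      | false =>
        exfalso
        rw [hba, if_pos rfl] at c1
        rw [hba', if_neg Bool.false_ne_true] at c2
        simp only [Set.mem_setOf_eq] at c1 c2
        linarith [le_trans (hfar (z' a) c2 (z a)) c1]
      | true =>
        rw [hba, if_pos rfl] at c1
        rw [hba', if_pos rfl] at c2
        simp only [Set.mem_setOf_eq] at c1 c2
        refine ⟨?_, rfl⟩
        have habs : |(z a : ℝ) - (z' a : ℝ)| < 1 := by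
          rw [abs_le] at c1 c2
          rw [abs_lt]
          constructor <;> nlinarith
        have hzz : |z a - z' a| < 1 := by
          have hcast : |((z a - z' a : ℤ) : ℝ)| < 1 := by
            push_cast
            exact habs
          exact_mod_cast hcast
        rw [abs_lt] at hzz
        omega
  exact ⟨funext fun a => (key a).1, funext fun a => (key a).2⟩

end CubeAux

open CubeAux Filter Topology Metric

/-- Approximate version: for every `ε > 0` and continuous `f : Iⁿ → ℝⁿ⁻¹` there exist a
point `p` and a compact connected subset of `f⁻¹[B(p, ε)]` connecting opposite faces. -/
theorem approx_level_set_connects_opposite_faces (n : ℕ) (hn : 1 ≤ n)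
    (f : (Fin n → ℝ) → (Fin (n - 1) → ℝ))
    (hf : ContinuousOn f (Set.Icc (0 : Fin n → ℝ) 1)) (ε : ℝ) (hε : 0 < ε) :
    ∃ (p : Fin (n - 1) → ℝ) (S : Set (Fin n → ℝ)),
      IsCompact S ∧ IsPreconnected S ∧ S ⊆ Set.Icc (0 : Fin n → ℝ) 1 ∧
      (∀ x ∈ S, f x ∈ Metric.ball p ε) ∧
      ∃ i : Fin n, (∃ x ∈ S, x i = 0) ∧ (∃ x ∈ S, x i = 1) := by
  classical
  by_contra hcon
  have hIcc : IsCompact (Set.Icc (0 : Fin n → ℝ) 1) := isCompact_Icc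
  have hIccC : IsClosed (Set.Icc (0 : Fin n → ℝ) 1) := isClosed_Icc
  have h01 : (0 : Fin n → ℝ) ≤ 1 := fun a => by norm_num
  -- a bound for f on the cube
  obtain ⟨R, hR⟩ := hIcc.exists_bound_of_continuousOn hf
  have hRnn : 0 ≤ R := le_trans (norm_nonneg _) (hR 0 (Set.mem_Icc.mpr ⟨le_refl _, h01⟩))
  have hRcoord : ∀ x ∈ Set.Icc (0 : Fin n → ℝ) 1, ∀ a, |f x a| ≤ R := by
    intro x hx a
    calc |f x a| = ‖f x a‖ := rfl
    _ ≤ ‖f x‖ := norm_le_pi_norm (f x) a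
    _ ≤ R := hR x hx
  obtain ⟨M, hM⟩ := exists_nat_ge (R/ε + 1)
  -- the index set of bricks
  set ℬ : Finset ((Fin (n-1) → ℤ) × (Fin (n-1) → Bool)) :=
    (Fintype.piFinset fun _ => Finset.Icc (-(M:ℤ)) (M:ℤ)) ×ˢ Finset.univ with hℬ
  -- faces
  set G0 : Fin n → Set (Fin n → ℝ) :=
    fun i => Set.Icc (0:Fin n → ℝ) 1 ∩ (fun x => x i) ⁻¹' {0} with hG0
  set G1 : Fin n → Set (Fin n → ℝ) :=
    fun i => Set.Icc (0:Fin n → ℝ) 1 ∩ (fun x => x i) ⁻¹' {1} with hG1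
  have hG0closed : ∀ i, IsClosed (G0 i) :=
    fun i => hIccC.inter (isClosed_singleton.preimage (continuous_apply i))
  have hG1closed : ∀ i, IsClosed (G1 i) :=
    fun i => hIccC.inter (isClosed_singleton.preimage (continuous_apply i))
  have hG0ne : ∀ i, (G0 i).Nonempty := by
    intro i
    exact ⟨0, Set.mem_Icc.mpr ⟨le_refl _, h01⟩, rfl⟩
  have hG1ne : ∀ i, (G1 i).Nonempty := by
    intro i
    refine ⟨fun a => if a = i then 1 else 0, Set.mem_Icc.mpr ⟨?_, ?_⟩, ?_⟩
    · intro a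
      dsimp only
      split_ifs <;> norm_num
    · intro a
      dsimp only
      split_ifs <;> norm_num
    · show (if i = i then (1:ℝ) else 0) = 1
      rw [if_pos rfl]
  have hG01 : ∀ i, G0 i ∩ G1 i = ∅ := by
    intro i
    rw [Set.eq_empty_iff_forall_notMem]
    rintro x ⟨⟨-, hx0⟩, ⟨-, hx1⟩⟩
    simp only [Set.mem_preimage, Set.mem_singleton_iff] at hx0 hx1
    rw [hx0] at hx1
    norm_num at hx1
  -- the compact preimages of bricks
  set K : Fin n → (Fin (n-1) → ℤ) → (Fin (n-1) → Bool) → Set (Fin n → ℝ) :=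
    fun i z b => Set.Icc (0:Fin n → ℝ) 1 ∩ f ⁻¹' (piece (n-1) ε (i:ℕ) z b) with hK
  have hKclosed : ∀ i z b, IsClosed (K i z b) :=
    fun i z b => hf.preimage_isClosed_of_isClosed hIccC (piece_isClosed _ _ _ _ _)
  have hKcompact : ∀ i z b, IsCompact (K i z b) :=
    fun i z b => hIcc.of_isClosed_subset (hKclosed i z b) Set.inter_subset_left
  have hilt : ∀ i : Fin n, (i:ℕ) ≤ n - 1 := by
    intro i
    have := i.isLt
    omega
  -- no preconnected subset of K i z b joins the two i-faces
  have hsep : ∀ (i : Fin n) z b, ∀ C : Set (Fin n → ℝ), C ⊆ K i z b → IsPreconnected C →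
      ¬((C ∩ G0 i).Nonempty ∧ (C ∩ G1 i).Nonempty) := by
    rintro i z b C hCK hCpre ⟨⟨x₀, hx₀C, hx₀G⟩, ⟨x₁, hx₁C, hx₁G⟩⟩
    apply hcon
    have hSsub : closure C ⊆ K i z b := (hKclosed i z b).closure_subset_iff.mpr hCK
    refine ⟨f x₀, closure C,
      hIcc.of_isClosed_subset isClosed_closure
        (hSsub.trans Set.inter_subset_left),
      hCpre.closure, hSsub.trans Set.inter_subset_left, ?_, i,
      ⟨x₀, subset_closure hx₀C, ?_⟩, ⟨x₁, subset_closure hx₁C, ?_⟩⟩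
    · intro x hx
      rw [Metric.mem_ball]
      have hx' := hSsub hx
      have hx₀' := hCK hx₀C
      exact piece_dist hε (hilt i) hx'.2 hx₀'.2
    · exact hx₀G.2
    · exact hx₁G.2
  -- split each K into two separated compact parts
  have H : ∀ (i : Fin n) z b, ∃ K₀ K₁ : Set (Fin n → ℝ),
      K i z b = K₀ ∪ K₁ ∧ IsCompact K₀ ∧ IsCompact K₁ ∧ K₀ ∩ K₁ = ∅ ∧
      K i z b ∩ G0 i ⊆ K₀ ∧ K i z b ∩ G1 i ⊆ K₁ :=
    fun i z b => clopen_split (hKcompact i z b) (hG0closed i) (hG1closed i) (hsep i z b)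
  choose K₀ K₁ hKsplit hK₀comp hK₁comp hKdisj hKA hKB using H
  -- the two sides
  set E0 : Fin n → Set (Fin n → ℝ) :=
    fun i => G0 i ∪ ⋃ zb ∈ ℬ, K₀ i zb.1 zb.2 with hE0
  set E1 : Fin n → Set (Fin n → ℝ) :=
    fun i => G1 i ∪ ⋃ zb ∈ ℬ, K₁ i zb.1 zb.2 with hE1
  have hE0closed : ∀ i, IsClosed (E0 i) := by
    intro i
    apply (hG0closed i).union
    apply IsCompact.isClosed
    apply ℬ.finite_toSet.isCompact_biUnion
    intro zb _
    exact hK₀comp i zb.1 zb.2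
  have hE1closed : ∀ i, IsClosed (E1 i) := by
    intro i
    apply (hG1closed i).union
    apply IsCompact.isClosed
    apply ℬ.finite_toSet.isCompact_biUnion
    intro zb _
    exact hK₁comp i zb.1 zb.2
  have hE0ne : ∀ i, (E0 i).Nonempty := fun i => (hG0ne i).mono Set.subset_union_left
  have hE1ne : ∀ i, (E1 i).Nonempty := fun i => (hG1ne i).mono Set.subset_union_left
  -- the two sides are disjoint
  have hEdisj : ∀ i, E0 i ∩ E1 i = ∅ := by
    intro i
    rw [Set.eq_empty_iff_forall_notMem]
    rintro x ⟨hx0, hx1⟩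
    have hmem0 : x ∈ G0 i ∨ ∃ zb ∈ ℬ, x ∈ K₀ i zb.1 zb.2 := by
      rcases hx0 with h | h
      · exact Or.inl h
      · right
        rw [Set.mem_iUnion₂] at h
        obtain ⟨zb, hzb, hxzb⟩ := h
        exact ⟨zb, hzb, hxzb⟩
    have hmem1 : x ∈ G1 i ∨ ∃ zb ∈ ℬ, x ∈ K₁ i zb.1 zb.2 := by
      rcases hx1 with h | h
      · exact Or.inl h
      · right
        rw [Set.mem_iUnion₂] at h
        obtain ⟨zb, hzb, hxzb⟩ := h
        exact ⟨zb, hzb, hxzb⟩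
    rcases hmem0 with h0 | ⟨zb, hzb, h0⟩ <;> rcases hmem1 with h1 | ⟨zb', hzb', h1⟩
    · have hg := hG01 i
      rw [Set.eq_empty_iff_forall_notMem] at hg
      exact hg x ⟨h0, h1⟩
    · -- x ∈ G0 i and x ∈ K₁ …
      have hxK : x ∈ K i zb'.1 zb'.2 := by
        rw [hKsplit i zb'.1 zb'.2]
        exact Or.inr h1
      have : x ∈ K₀ i zb'.1 zb'.2 := hKA i zb'.1 zb'.2 ⟨hxK, h0⟩
      have hd := hKdisj i zb'.1 zb'.2
      rw [Set.eq_empty_iff_forall_notMem] at hd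
      exact hd x ⟨this, h1⟩
    · have hxK : x ∈ K i zb.1 zb.2 := by
        rw [hKsplit i zb.1 zb.2]
        exact Or.inl h0
      have : x ∈ K₁ i zb.1 zb.2 := hKB i zb.1 zb.2 ⟨hxK, h1⟩
      have hd := hKdisj i zb.1 zb.2
      rw [Set.eq_empty_iff_forall_notMem] at hd
      exact hd x ⟨h0, this⟩
    · by_cases hzz : zb = zb'
      · subst hzz
        have hd := hKdisj i zb.1 zb.2
        rw [Set.eq_empty_iff_forall_notMem] at hd
        exact hd x ⟨h0, h1⟩
      · have hxK : x ∈ K i zb.1 zb.2 := by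
          rw [hKsplit i zb.1 zb.2]; exact Or.inl h0
        have hxK' : x ∈ K i zb'.1 zb'.2 := by
          rw [hKsplit i zb'.1 zb'.2]; exact Or.inr h1
        have hp1 : f x ∈ piece (n-1) ε (i:ℕ) zb.1 zb.2 := hxK.2
        have hp2 : f x ∈ piece (n-1) ε (i:ℕ) zb'.1 zb'.2 := hxK'.2
        obtain ⟨hzeq, hbeq⟩ := piece_disjoint hε (hilt i) hp1 hp2
        exact hzz (Prod.ext hzeq hbeq)
  -- the separating functions
  set φ : Fin n → (Fin n → ℝ) → ℝ :=
    fun i x => infDist x (E0 i) - infDist x (E1 i) with hφ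
  have hφcont : ∀ i, Continuous (φ i) :=
    fun i => (continuous_infDist_pt (E0 i)).sub (continuous_infDist_pt (E1 i))
  set F₀ : Fin n → Set (Fin n → ℝ) :=
    fun i => Set.Icc (0:Fin n → ℝ) 1 ∩ {x | φ i x ≤ 0} with hF₀
  set F₁ : Fin n → Set (Fin n → ℝ) :=
    fun i => Set.Icc (0:Fin n → ℝ) 1 ∩ {x | 0 ≤ φ i x} with hF₁
  have hmemE0 : ∀ i x, x ∈ E0 i → x ∉ E1 i := by
    intro i x hx0 hx1
    have := hEdisj i
    rw [Set.eq_empty_iff_forall_notMem] at this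
    exact this x ⟨hx0, hx1⟩
  have hφneg : ∀ i x, x ∈ E0 i → φ i x < 0 := by
    intro i x hx
    have h1 : infDist x (E0 i) = 0 := infDist_zero_of_mem hx
    have h2 : 0 < infDist x (E1 i) :=
      ((hE1closed i).notMem_iff_infDist_pos (hE1ne i)).mp (hmemE0 i x hx)
    rw [hφ]
    dsimp only
    linarith
  have hφpos : ∀ i x, x ∈ E1 i → 0 < φ i x := by
    intro i x hx
    have h1 : infDist x (E1 i) = 0 := infDist_zero_of_mem hx
    have h2 : 0 < infDist x (E0 i) := by
      apply ((hE0closed i).notMem_iff_infDist_pos (hE0ne i)).mp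
      intro hx0
      exact hmemE0 i x hx0 hx
    rw [hφ]
    dsimp only
    linarith
  -- apply the separator intersection theorem
  obtain ⟨w, hwIcc, hw⟩ := separator_intersection n F₀ F₁
    (fun i => hIccC.inter (isClosed_le (hφcont i) continuous_const))
    (fun i => hIccC.inter (isClosed_le continuous_const (hφcont i)))
    (by
      intro i x hx
      rcases le_total (φ i x) 0 with h | h
      · exact Or.inl ⟨hx, h⟩
      · exact Or.inr ⟨hx, h⟩)
    (by
      intro i x hx hxi
      have hxG : x ∈ G0 i := ⟨hx, hxi⟩
      exact ⟨hx, le_of_lt (hφneg i x (Or.inl hxG))⟩)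
    (by
      intro i x hx hxi hxF
      have hxG : x ∈ G1 i := ⟨hx, hxi⟩
      have := hφpos i x (Or.inl hxG)
      have hle := hxF.2
      simp only [Set.mem_setOf_eq] at hle
      linarith)
  -- w lies on all interfaces: φ i w = 0 for all i
  have hφw : ∀ i, φ i w = 0 := by
    intro i
    obtain ⟨h0, h1⟩ := hw i
    have hle := h0.2
    have hge := h1.2
    simp only [Set.mem_setOf_eq] at hle hge
    linarith
  -- but w is in some brick preimage
  obtain ⟨j, hj, z, b, hwp, hzb⟩ := piece_cover hε (f w)
  have hjn : j < n := by omega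
  set i : Fin n := ⟨j, hjn⟩ with hi
  have hzbounds : ∀ a, z a ∈ Finset.Icc (-(M:ℤ)) (M:ℤ) := by
    intro a
    have h1 := hzb a
    have h2 : |f w a| ≤ R := hRcoord w hwIcc a
    have h3 : |f w a|/ε ≤ R/ε := by
      rw [div_le_div_iff_of_pos_right hε]
      exact h2
    rw [Finset.mem_Icc]
    have h4 : |(z a : ℝ)| ≤ (M:ℝ) := by
      calc |(z a : ℝ)| ≤ |f w a|/ε + 1 := h1
      _ ≤ R/ε + 1 := by linarith
      _ ≤ M := hM
    rw [abs_le] at h4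
    constructor
    · exact_mod_cast h4.1
    · exact_mod_cast h4.2
  have hzbB : (z, b) ∈ ℬ := by
    rw [hℬ, Finset.mem_product]
    exact ⟨Fintype.mem_piFinset.mpr hzbounds, Finset.mem_univ b⟩
  have hwK : w ∈ K i z b := by
    refine ⟨hwIcc, ?_⟩
    show f w ∈ piece (n-1) ε (i:ℕ) z b
    have : (i:ℕ) = j := rfl
    rw [this]
    exact hwp
  have hwsplit : w ∈ K₀ i z b ∪ K₁ i z b := by
    rw [← hKsplit i z b]
    exact hwK
  rcases hwsplit with h | h
  · have hwE0 : w ∈ E0 i := Or.inr (Set.mem_biUnion hzbB h)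
    have := hφneg i w hwE0
    rw [hφw i] at this
    exact lt_irrefl 0 this
  · have hwE1 : w ∈ E1 i := Or.inr (Set.mem_biUnion hzbB h)
    have := hφpos i w hwE1
    rw [hφw i] at this
    exact lt_irrefl 0 this
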